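/- arXiv:1912.01656 — 11 statements merged into one kernel-verified Lean document; each statement's English description precedes it below -/
import Mathlib

section
/- Let p be a prime, m ≥ 2, and define a_ℓ = Σ_{k=⌈ℓ/p^{m-1}⌉}^{p-1} C(k p^{m-1}, ℓ). Then p divides a_ℓ for every 1 ≤ ℓ ≤ p^{m-1}(p−1) − 1. -/
open Polynomial in
theorem stmt1_aux (p : ℕ) (hp : p.Prime) (n : ℕ) (ℓ : ℕ)
    (hℓ : ℓ < p ^ n * (p - 1)) :
    p ∣ ∑ k ∈ Finset.range p, (k * p ^ n).choose ℓ := by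
  haveI : Fact p.Prime := ⟨hp⟩
  set q := p ^ n with hq
  have hqle : q ≤ q * p := Nat.le_mul_of_pos_right q hp.pos
  -- work in (ZMod p)[X]
  have key : ∑ k ∈ Finset.range p, ((X + 1 : (ZMod p)[X]) ^ q) ^ k = X ^ (q * (p - 1)) := by
    have hXq : ((X + 1 : (ZMod p)[X]) ^ q) - 1 = X ^ q := by
      rw [add_pow_char_pow]; ring
    have hne : (X : (ZMod p)[X]) ^ q ≠ 0 := pow_ne_zero _ X_ne_zero
    apply mul_left_cancel₀ hne
    calc X ^ q * ∑ k ∈ Finset.range p, ((X + 1 : (ZMod p)[X]) ^ q) ^ k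
        = (((X + 1 : (ZMod p)[X]) ^ q) - 1) * ∑ k ∈ Finset.range p, ((X + 1) ^ q) ^ k := by
          rw [hXq]
      _ = ((X + 1 : (ZMod p)[X]) ^ q) ^ p - 1 := by
          rw [mul_comm, geom_sum_mul]
      _ = (((X + 1 : (ZMod p)[X]) ^ q) - 1) ^ p := by
          rw [sub_pow_char, one_pow]
      _ = X ^ (q * p) := by rw [hXq, ← pow_mul]
      _ = X ^ q * X ^ (q * (p - 1)) := by
          rw [← pow_add]
          congr 1
          rw [Nat.mul_sub, mul_one]
          omega
  have hcoeff := congrArg (fun f => Polynomial.coeff f ℓ) key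
  simp only [Polynomial.finset_sum_coeff, ← pow_mul, Polynomial.coeff_X_pow] at hcoeff
  rw [if_neg (Nat.ne_of_lt hℓ)] at hcoeff
  have hcast : ∑ k ∈ Finset.range p, (((k * q).choose ℓ : ZMod p)) = 0 := by
    rw [← hcoeff]
    apply Finset.sum_congr rfl
    intro k _
    rw [mul_comm q k, Polynomial.coeff_X_add_one_pow]
  rw [← Nat.cast_sum] at hcast
  exact (ZMod.natCast_eq_zero_iff _ _).1 hcast

/-- For a prime `p`, `m ≥ 2`, and `a_ℓ = Σ_{k=⌈ℓ/p^{m-1}⌉}^{p-1} C(k p^{m-1}, ℓ)`,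
we have `p ∣ a_ℓ` for every `1 ≤ ℓ ≤ p^{m-1}(p-1) - 1`. -/
theorem stmt1 (p m : ℕ) (hp : p.Prime) (hm : 2 ≤ m) (ℓ : ℕ)
    (h1 : 1 ≤ ℓ) (h2 : ℓ ≤ p ^ (m - 1) * (p - 1) - 1) :
    p ∣ ∑ k ∈ Finset.Icc (ℓ ⌈/⌉ p ^ (m - 1)) (p - 1), (k * p ^ (m - 1)).choose ℓ := by
  set q := p ^ (m - 1) with hq
  have hq1 : 0 < q := Nat.pow_pos hp.pos
  have hp2 : 2 ≤ p := hp.two_le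
  have hqp : 1 ≤ q * (p - 1) := Nat.one_le_iff_ne_zero.2 (Nat.mul_ne_zero (by omega) (by omega))
  have hsum : ∑ k ∈ Finset.Icc (ℓ ⌈/⌉ q) (p - 1), (k * q).choose ℓ
      = ∑ k ∈ Finset.range p, (k * q).choose ℓ := by
    apply Finset.sum_subset
    · intro k hk
      simp only [Finset.mem_Icc] at hk
      simp only [Finset.mem_range]
      omega
    · intro k hk hk'
      simp only [Finset.mem_range] at hk
      simp only [Finset.mem_Icc] at hk'
      have hklt : k < ℓ ⌈/⌉ q := by omega
      have hqk : q * k < ℓ := by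
        by_contra h
        push_neg at h
        exact hklt.not_ge ((ceilDiv_le_iff_le_mul hq1).2 h)
      rw [mul_comm]
      exact Nat.choose_eq_zero_of_lt hqk
  rw [hsum]
  have hℓ' : ℓ < q * (p - 1) := by omega
  rw [hq] at hℓ'
  exact stmt1_aux p hp (m - 1) ℓ hℓ'
end

section
/- Let p be a prime, m ≥ 2, and suppose 1 ≤ ℓ < (p−2)p^{m-1} with ord_p(ℓ) < m−1. Then the p-adic valuation of a_ℓ = Σ_{k=⌈ℓ/p^{m-1}⌉}^{p-1} C(k p^{m-1}, ℓ) is at least 2. -/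
lemma my_sum_modEq {ι : Type*} (s : Finset ι) (f g : ι → ℕ) (n : ℕ)
    (h : ∀ i ∈ s, f i ≡ g i [MOD n]) :
    (∑ i ∈ s, f i) ≡ (∑ i ∈ s, g i) [MOD n] := by
  classical
  induction s using Finset.induction_on with
  | empty => simp [Nat.ModEq.refl]
  | insert _ _ hx ih =>
    rename_i a t
    simp only [Finset.sum_insert hx]
    exact (h a (Finset.mem_insert_self a t)).add
      (ih fun i hi => h i (Finset.mem_insert_of_mem hi))

lemma my_mul_modEq_sq {p a b c : ℕ} (h : a ≡ b [MOD p]) (hc : p ∣ c) :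
    a * c ≡ b * c [MOD p ^ 2] := by
  obtain ⟨d, rfl⟩ := hc
  have h2 := h.mul_right' (p * d)
  exact Nat.ModEq.of_dvd ⟨d, by ring⟩ h2

lemma my_dvd_choose_mul_pow (p : ℕ) (hp : p.Prime) :
    ∀ (e k t : ℕ), ¬ (p ^ e ∣ t) → p ∣ (k * p ^ e).choose t := by
  haveI : Fact p.Prime := ⟨hp⟩
  intro e
  induction e with
  | zero => intro k t ht; exact absurd (one_dvd t) (by simpa using ht)
  | succ e ih =>
    intro k t ht
    have lucas := Choose.choose_modEq_choose_mod_mul_choose_div_nat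
      (p := p) (n := k * p ^ (e + 1)) (k := t)
    have hmod : (k * p ^ (e + 1)) % p = 0 := by
      rw [pow_succ, ← mul_assoc, Nat.mul_mod_left]
    have hdiv : (k * p ^ (e + 1)) / p = k * p ^ e := by
      rw [pow_succ, ← mul_assoc, Nat.mul_div_cancel _ hp.pos]
    rw [hmod, hdiv] at lucas
    rw [← Nat.modEq_zero_iff_dvd]
    refine lucas.trans ?_
    by_cases h0 : t % p = 0
    · have h0' : p ∣ t := Nat.dvd_of_mod_eq_zero h0
      have ht' : ¬ (p ^ e ∣ t / p) := by
        rintro ⟨c, hc⟩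
        exact ht ⟨c, by rw [pow_succ, mul_comm (p ^ e) p, mul_assoc, ← hc,
          Nat.mul_div_cancel' h0']⟩
      rw [h0, Nat.choose_zero_right, one_mul]
      exact Nat.modEq_zero_iff_dvd.mpr (ih k (t / p) ht')
    · rw [Nat.choose_eq_zero_of_lt (Nat.pos_of_ne_zero h0), zero_mul]

lemma my_choose_mul_pow_modEq (p : ℕ) (hp : p.Prime) :
    ∀ (e k s : ℕ), (k * p ^ e).choose (s * p ^ e) ≡ k.choose s [MOD p] := by
  haveI : Fact p.Prime := ⟨hp⟩
  intro e
  induction e with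
  | zero => intro k s; simp [Nat.ModEq.refl]
  | succ e ih =>
    intro k s
    have lucas := Choose.choose_modEq_choose_mod_mul_choose_div_nat
      (p := p) (n := k * p ^ (e + 1)) (k := s * p ^ (e + 1))
    have hmod : ∀ a : ℕ, (a * p ^ (e + 1)) % p = 0 := fun a => by
      rw [pow_succ, ← mul_assoc, Nat.mul_mod_left]
    have hdiv : ∀ a : ℕ, (a * p ^ (e + 1)) / p = a * p ^ e := fun a => by
      rw [pow_succ, ← mul_assoc, Nat.mul_div_cancel _ hp.pos]
    rw [hmod, hmod, hdiv, hdiv, Nat.choose_self, one_mul] at lucas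
    exact lucas.trans (ih k s)

lemma my_key (p e r : ℕ) (hp : p.Prime) (hr : 0 < r) (hrq : r < p ^ e) :
    ∀ k s, (k * p ^ e).choose (s * p ^ e + r) ≡
      k * (k - 1).choose s * (p ^ e).choose r [MOD p ^ 2] := by
  set q := p ^ e with hq
  clear_value q
  have hq1 : 1 ≤ q := lt_of_le_of_lt (Nat.zero_le r) hrq
  have hCqr : p ∣ q.choose r := by
    rw [hq]; exact hp.dvd_choose_pow hr.ne' (by rw [← hq]; exact hrq.ne)
  intro k
  induction k with
  | zero =>
    intro s
    rw [zero_mul, zero_mul, zero_mul, Nat.choose_eq_zero_of_lt (by omega)]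
  | succ k ih =>
    intro s
    rw [Nat.add_sub_cancel]
    have expand : ((k + 1) * q).choose (s * q + r) =
        ∑ i ∈ Finset.range (s * q + r + 1), (k * q).choose i * q.choose (s * q + r - i) := by
      rw [add_mul, one_mul, Nat.add_choose_eq, Finset.Nat.sum_antidiagonal_eq_sum_range_succ_mk]
    rw [expand]
    have hsq0 : (s = 0 ∧ s * q = 0) ∨ (1 ≤ s ∧ q ≤ s * q) := by
      rcases s with _ | s'
      · exact Or.inl ⟨rfl, zero_mul q⟩
      · exact Or.inr ⟨Nat.succ_le_succ (Nat.zero_le s'), Nat.le_mul_of_pos_left q (Nat.succ_pos s')⟩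
    set ℓ := s * q + r with hℓ
    set A := k * (k - 1).choose s * q.choose r with hA
    set B := k.choose s * q.choose r with hB
    set C := k * (k - 1).choose (s - 1) * q.choose r with hC
    clear_value ℓ A B C
    have hterm : ∀ i ∈ Finset.range (ℓ + 1),
        (k * q).choose i * q.choose (ℓ - i) ≡
        ((if i = ℓ then A else 0) + (if i = s * q then B else 0) +
         (if 1 ≤ s ∧ i = ℓ - q then C else 0)) [MOD p ^ 2] := by
      intro i hi
      have hi' : i ≤ ℓ := Nat.lt_succ_iff.mp (Finset.mem_range.mp hi)
      by_cases h1 : i = ℓ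
      · subst h1
        rw [if_pos rfl, if_neg (by omega), if_neg (by omega), Nat.sub_self,
          Nat.choose_zero_right, mul_one, add_zero, add_zero, hA, hℓ]
        exact ih s
      · by_cases h2 : i = s * q
        · subst h2
          rw [if_neg h1, if_pos rfl, if_neg (by omega), zero_add, add_zero]
          have hx : ℓ - s * q = r := by omega
          rw [hx, hB]
          exact my_mul_modEq_sq (by rw [hq]; exact my_choose_mul_pow_modEq p hp e k s) hCqr
        · by_cases h3 : 1 ≤ s ∧ i = ℓ - q
          · obtain ⟨hs, h4⟩ := h3
            subst h4
            rw [if_neg h1, if_neg h2, if_pos ⟨hs, rfl⟩, zero_add, zero_add]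
            have e0 : (s - 1) * q + q = s * q := by
              rcases Nat.exists_eq_add_of_le hs with ⟨c, rfl⟩
              simp [Nat.add_sub_cancel_left, add_mul]
              omega
            have e1 : ℓ - (ℓ - q) = q := by omega
            have e2 : ℓ - q = (s - 1) * q + r := by omega
            rw [e1, Nat.choose_self, mul_one, e2, hC]
            exact ih (s - 1)
          · rw [if_neg h1, if_neg h2, if_neg h3]
            have hj1 : 1 ≤ ℓ - i := by omega
            rcases lt_trichotomy (ℓ - i) q with hjq | hjq | hjq
            · have hd2 : p ∣ q.choose (ℓ - i) := by
                rw [hq]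
                exact hp.dvd_choose_pow (by omega) (by rw [← hq]; omega)
              have hnd : ¬ (q ∣ i) := by
                rintro ⟨t, ht⟩
                have hji : i + (ℓ - i) = ℓ := by omega
                have hr' : ℓ % q = r := by
                  rw [hℓ, Nat.mul_add_mod', Nat.mod_eq_of_lt hrq]
                have h6 : (i + (ℓ - i)) % q = (ℓ - i) % q := by
                  rw [ht, mul_comm q t, Nat.mul_add_mod']
                rw [hji, hr', Nat.mod_eq_of_lt hjq] at h6
                exact h2 (by omega)
              have hd1 : p ∣ (k * q).choose i := by
                rw [hq]
                exact my_dvd_choose_mul_pow p hp e k i (by rw [← hq]; exact hnd)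
              have hdd : p ^ 2 ∣ (k * q).choose i * q.choose (ℓ - i) := by
                rw [pow_two]; exact mul_dvd_mul hd1 hd2
              simpa using (Nat.modEq_zero_iff_dvd.mpr hdd)
            · exact absurd ⟨by omega, by omega⟩ h3
            · rw [Nat.choose_eq_zero_of_lt hjq, mul_zero]
              simp [Nat.ModEq.refl]
    refine (my_sum_modEq _ _ _ _ hterm).trans ?_
    rw [Finset.sum_add_distrib, Finset.sum_add_distrib,
      Finset.sum_ite_eq' (Finset.range (ℓ + 1)) ℓ (fun _ => A),
      Finset.sum_ite_eq' (Finset.range (ℓ + 1)) (s * q) (fun _ => B),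
      if_pos (Finset.mem_range.mpr (by omega)), if_pos (Finset.mem_range.mpr (by omega))]
    have hthird : (∑ i ∈ Finset.range (ℓ + 1), if 1 ≤ s ∧ i = ℓ - q then C else 0)
        = if 1 ≤ s then C else 0 := by
      by_cases hs : 1 ≤ s
      · simp only [hs, true_and, if_true]
        rw [Finset.sum_ite_eq' (Finset.range (ℓ + 1)) (ℓ - q) (fun _ => C),
          if_pos (Finset.mem_range.mpr (by omega))]
      · simp [hs]
    rw [hthird]
    have key : A + B + (if 1 ≤ s then C else 0) = (k + 1) * k.choose s * q.choose r := by
      rcases s with _ | s'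
      · rw [if_neg (by decide), add_zero, hA, hB]
        simp only [Nat.choose_zero_right, mul_one, one_mul]
        ring
      · rw [if_pos (Nat.succ_le_succ (Nat.zero_le s')), hA, hB, hC, Nat.add_sub_cancel]
        rcases k with _ | k''
        · simp
        · rw [Nat.succ_sub_one, Nat.choose_succ_succ' k'' s']
          ring
    rw [key]


lemma my_sum_range_choose (n s : ℕ) :
    ∑ k ∈ Finset.range n, k * (k - 1).choose s = (s + 1) * n.choose (s + 2) := by
  induction n with
  | zero => simp
  | succ n ihn =>
    rw [Finset.sum_range_succ, ihn, Nat.choose_succ_succ' n (s + 1)]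
    have hn : n * (n - 1).choose s = (s + 1) * n.choose (s + 1) := by
      rcases n with _ | n'
      · simp
      · rw [Nat.succ_sub_one, Nat.mul_comm (s + 1) ((n' + 1).choose (s + 1))]
        exact Nat.add_one_mul_choose_eq n' s
    rw [hn]
    ring

/-- For a prime `p`, `m ≥ 2`, `1 ≤ ℓ < (p-2) p^{m-1}` with `ord_p(ℓ) < m - 1`,
the `p`-adic valuation of `a_ℓ = Σ_{k=⌈ℓ/p^{m-1}⌉}^{p-1} C(k p^{m-1}, ℓ)` is at least 2. -/
theorem stmt2 (p m : ℕ) (hp : p.Prime) (hm : 2 ≤ m) (ℓ : ℕ)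
    (h1 : 1 ≤ ℓ) (h2 : ℓ < (p - 2) * p ^ (m - 1))
    (hord : (padicValNat p ℓ : ℤ) < (m : ℤ) - 1) :
    p ^ 2 ∣ ∑ k ∈ Finset.Icc (ℓ ⌈/⌉ p ^ (m - 1)) (p - 1), (k * p ^ (m - 1)).choose ℓ := by
  haveI : Fact p.Prime := ⟨hp⟩
  have hq0 : 0 < p ^ (m - 1) := pow_pos hp.pos _
  set q := p ^ (m - 1) with hq
  -- p ≥ 3
  have hp2 : 0 < p - 2 := by
    rcases Nat.eq_zero_or_pos (p - 2) with h | h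
    · rw [h, zero_mul] at h2; omega
    · exact h
  have hp3 : 3 ≤ p := by
    have := hp.two_le
    omega
  -- q does not divide ℓ
  have hvlt : padicValNat p ℓ < m - 1 := by omega
  have hndvd : ¬ q ∣ ℓ := by
    rw [hq]
    intro hdvd
    have := (padicValNat_dvd_iff_le (p := p) (Nat.one_le_iff_ne_zero.mp h1)).mp hdvd
    omega
  set s := ℓ / q with hs
  set r := ℓ % q with hrdef
  have hr0 : 0 < r := by
    rcases Nat.eq_zero_or_pos r with h | h
    · exact absurd (Nat.dvd_of_mod_eq_zero (hrdef ▸ h)) hndvd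
    · exact h
  have hrq : r < q := Nat.mod_lt ℓ hq0
  have hℓ : ℓ = s * q + r := by
    rw [hs, hrdef, Nat.mul_comm]
    exact (Nat.div_add_mod ℓ q).symm
  have hsq : (s + 1) * q = s * q + q := by ring
  have hslt : s < p - 2 := by
    have h3 : s * q ≤ ℓ := by omega
    have h4 : s * q < (p - 2) * q := lt_of_le_of_lt h3 h2
    exact Nat.lt_of_mul_lt_mul_right h4
  -- the ceiling
  have hceil : ℓ ⌈/⌉ q = s + 1 := by
    rw [Nat.ceilDiv_eq_add_pred_div]
    have hx : ℓ + q - 1 = (r - 1) + (s + 1) * q := by omega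
    rw [hx, Nat.add_mul_div_right _ _ hq0, Nat.div_eq_of_lt (by omega), Nat.zero_add]
  rw [hceil]
  -- convert Icc to a range sum
  have hI : Finset.Icc (s + 1) (p - 1) = Finset.Ico (s + 1) p := by
    rw [← Finset.Ico_add_one_right_eq_Icc]
    congr 1
    omega
  have hsplit : ∑ k ∈ Finset.range p, (k * q).choose ℓ
      = ∑ k ∈ Finset.Icc (s + 1) (p - 1), (k * q).choose ℓ := by
    rw [hI, Finset.range_eq_Ico,
      ← Finset.sum_Ico_consecutive _ (Nat.zero_le (s + 1)) (by omega : s + 1 ≤ p)]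
    have hzero : ∑ k ∈ Finset.Ico 0 (s + 1), (k * q).choose ℓ = 0 := by
      apply Finset.sum_eq_zero
      intro k hk
      have hks : k ≤ s := by
        simp only [Finset.mem_Ico] at hk
        omega
      have : k * q < ℓ := lt_of_le_of_lt (Nat.mul_le_mul_right q hks) (by omega)
      exact Nat.choose_eq_zero_of_lt this
    rw [hzero, Nat.zero_add]
  rw [← hsplit]
  -- main congruence
  have hcong : ∑ k ∈ Finset.range p, (k * q).choose ℓ ≡
      ∑ k ∈ Finset.range p, k * (k - 1).choose s * q.choose r [MOD p ^ 2] := by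
    apply my_sum_modEq
    intro k _
    rw [hℓ, hq]
    exact my_key p (m - 1) r hp hr0 (hq ▸ hrq) k s
  have hval : ∑ k ∈ Finset.range p, k * (k - 1).choose s * q.choose r
      = ((s + 1) * p.choose (s + 2)) * q.choose r := by
    rw [← Finset.sum_mul, my_sum_range_choose]
  have hdvd2 : p ^ 2 ∣ ∑ k ∈ Finset.range p, k * (k - 1).choose s * q.choose r := by
    rw [hval, pow_two]
    apply mul_dvd_mul
    · exact Dvd.dvd.mul_left (hp.dvd_choose_self (by omega) (by omega)) (s + 1)
    · rw [hq]
      exact hp.dvd_choose_pow hr0.ne' (by rw [← hq]; exact hrq.ne)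
  exact Nat.modEq_zero_iff_dvd.mp (hcong.trans (Nat.modEq_zero_iff_dvd.mpr hdvd2))
end

section
/- Let p be a prime, m ≥ 2, 1 ≤ ℓ < (p−2)p^{m-1}, and ⌈ℓ/p^{m-1}⌉ ≤ k ≤ p−1. If ord_p(ℓ) ≤ m−3, then p^2 divides C(k p^{m-1}, ℓ). -/
/-- For a prime `p`, `m ≥ 2`, `1 ≤ ℓ < (p-2) p^{m-1}`, `⌈ℓ/p^{m-1}⌉ ≤ k ≤ p-1`:
if `ord_p(ℓ) ≤ m - 3` then `p^2 ∣ C(k p^{m-1}, ℓ)`. -/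
theorem stmt3 (p m : ℕ) (hp : p.Prime) (hm : 2 ≤ m) (ℓ k : ℕ)
    (h1 : 1 ≤ ℓ) (h2 : ℓ < (p - 2) * p ^ (m - 1))
    (hk1 : ℓ ⌈/⌉ p ^ (m - 1) ≤ k) (hk2 : k ≤ p - 1)
    (hord : (padicValNat p ℓ : ℤ) ≤ (m : ℤ) - 3) :
    p ^ 2 ∣ (k * p ^ (m - 1)).choose ℓ := by
  haveI : Fact p.Prime := ⟨hp⟩
  have hppos : 0 < p ^ (m - 1) := pow_pos hp.pos _
  have hℓn : ℓ ≤ k * p ^ (m - 1) := by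
    have h := le_smul_ceilDiv (b := ℓ) hppos
    rw [smul_eq_mul] at h
    calc ℓ ≤ p ^ (m - 1) * (ℓ ⌈/⌉ p ^ (m - 1)) := h
      _ ≤ p ^ (m - 1) * k := Nat.mul_le_mul_left _ hk1
      _ = k * p ^ (m - 1) := Nat.mul_comm _ _
  have hkpos : 1 ≤ k := by
    rcases Nat.eq_zero_or_pos k with rfl | h
    · simp at hℓn; omega
    · exact h
  have hklt : k < p := by
    have := hp.two_le; omega
  -- key identity: (k*p^(m-1)) * C(n-1, ℓ-1) = C(n, ℓ) * ℓ
  set n := k * p ^ (m - 1) with hn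
  have hnpos : 0 < n := Nat.mul_pos hkpos hppos
  have hid : n * (n - 1).choose (ℓ - 1) = n.choose ℓ * ℓ := by
    have := Nat.add_one_mul_choose_eq (n - 1) (ℓ - 1)
    rwa [Nat.sub_add_cancel hnpos, Nat.sub_add_cancel h1] at this
  have hC0 : n.choose ℓ ≠ 0 := (Nat.choose_pos hℓn).ne'
  have hC10 : (n - 1).choose (ℓ - 1) ≠ 0 :=
    (Nat.choose_pos (by omega : ℓ - 1 ≤ n - 1)).ne'
  have hval : padicValNat p n + padicValNat p ((n - 1).choose (ℓ - 1))
      = padicValNat p (n.choose ℓ) + padicValNat p ℓ := by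
    rw [← padicValNat.mul (by omega) hC10, ← padicValNat.mul hC0 (by omega), hid]
  have hvn : padicValNat p n = m - 1 := by
    rw [hn, padicValNat.mul (by omega) (by omega), padicValNat.prime_pow,
      padicValNat.eq_zero_of_not_dvd (Nat.not_dvd_of_pos_of_lt hkpos hklt), zero_add]
  have h2le : 2 ≤ padicValNat p (n.choose ℓ) := by
    have hv : (padicValNat p n : ℤ) = (m : ℤ) - 1 := by rw [hvn]; omega
    omega
  exact (padicValNat_dvd_iff_le hC0).2 h2le
end

section
/- Let p be a prime, m ≥ 2, and ℓ = r p^{m-2} with gcd(r, p) = 1 and 1 ≤ ℓ < (p−2)p^{m-1}. Set s = #{j : 1 ≤ j ≤ ℓ−1, ord_p(j) = m−1}. Then for each integer k with s+1 ≤ k ≤ p−1, C(k p^{m-1}, ℓ) ≡ (k p / r) · (−1)^{ℓ−s−1} · Π_{j=1}^{s} (k/j − 1) modulo p^2 ℤ_p. -/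
section Aux

variable {p : ℕ} [hp : Fact p.Prime]

lemma aux_norm_nat_unit (u : ℕ) (hu : ¬ p ∣ u) : ‖(u : ℚ_[p])‖ = 1 := by
  have h1 : ‖((u : ℤ) : ℚ_[p])‖ ≤ 1 := Padic.norm_int_le_one _
  have h2 : ¬ ‖((u : ℤ) : ℚ_[p])‖ < 1 := by
    rw [Padic.norm_intCast_lt_one_iff]
    exact_mod_cast hu
  push_cast at h1 h2
  linarith [lt_or_eq_of_le h1]

lemma aux_norm_nat (j : ℕ) (hj : j ≠ 0) :
    ‖(j : ℚ_[p])‖ = (p : ℝ) ^ (-(padicValNat p j : ℤ)) := by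
  conv_lhs => rw [← Nat.ordProj_mul_ordCompl_eq_self j p]
  push_cast [Nat.factorization_def j hp.out]
  have hnd : ¬ p ∣ j / p ^ padicValNat p j := by
    have := Nat.not_dvd_ordCompl hp.out hj
    rwa [Nat.factorization_def j hp.out] at this
  rw [norm_mul, Padic.norm_p_pow, aux_norm_nat_unit _ hnd, mul_one, padicValRat.of_nat]

lemma aux_fact_prod (n : ℕ) : (∏ j ∈ Finset.Icc 1 n, j) = Nat.factorial n := by
  induction n with
  | zero => simp
  | succ n ih => rw [Finset.prod_Icc_succ_top (by omega), ih, Nat.factorial_succ, mul_comm]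

lemma aux_choose_prod (n ℓ : ℕ) (h1 : 1 ≤ ℓ) (h2 : ℓ ≤ n) :
    (n.choose ℓ : ℚ_[p]) =
      ((n : ℚ_[p]) / ℓ) * ∏ j ∈ Finset.Icc 1 (ℓ - 1), (((n : ℚ_[p]) - j) / j) := by
  have key : (n.choose ℓ : ℚ_[p]) * (Nat.factorial ℓ : ℚ_[p]) =
      ∏ i ∈ Finset.range ℓ, ((n : ℚ_[p]) - i) := by
    have h := Nat.descFactorial_eq_factorial_mul_choose n ℓ
    rw [Nat.descFactorial_eq_prod_range] at h
    have := congrArg (fun x : ℕ => (x : ℚ_[p])) h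
    push_cast at this
    rw [mul_comm, ← this]
    exact Finset.prod_congr rfl fun i hi => by
      rw [Nat.cast_sub (by have := Finset.mem_range.mp hi; omega)]
  have hfac : (Nat.factorial ℓ : ℚ_[p]) ≠ 0 := by
    exact_mod_cast Nat.factorial_ne_zero ℓ
  have hrange : ∏ i ∈ Finset.range ℓ, ((n : ℚ_[p]) - i) =
      (n : ℚ_[p]) * ∏ j ∈ Finset.Icc 1 (ℓ - 1), ((n : ℚ_[p]) - j) := by
    have hIcoIcc : Finset.Ico 1 ℓ = Finset.Icc 1 (ℓ - 1) := by
      rw [← Finset.Ico_add_one_right_eq_Icc]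
      congr 1
      omega
    rw [Finset.range_eq_Ico, Finset.prod_eq_prod_Ico_succ_bot h1, hIcoIcc]
    norm_num
  have hfacsplit : (Nat.factorial ℓ : ℚ_[p]) =
      (ℓ : ℚ_[p]) * ∏ j ∈ Finset.Icc 1 (ℓ - 1), (j : ℚ_[p]) := by
    conv_lhs => rw [show ℓ = (ℓ - 1) + 1 by omega, Nat.factorial_succ, ← aux_fact_prod (ℓ - 1)]
    push_cast
    rw [show ((ℓ - 1 : ℕ) : ℚ_[p]) + 1 = (ℓ : ℚ_[p]) by
      have : ((ℓ - 1 : ℕ) : ℚ_[p]) = (ℓ : ℚ_[p]) - 1 := by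
        rw [Nat.cast_sub h1]; norm_num
      rw [this]; ring]
  have hjne : ∀ j ∈ Finset.Icc 1 (ℓ - 1), (j : ℚ_[p]) ≠ 0 := fun j hj => by
    have := (Finset.mem_Icc.mp hj).1
    exact Nat.cast_ne_zero.mpr (by omega)
  have hprodne : (∏ j ∈ Finset.Icc 1 (ℓ - 1), (j : ℚ_[p])) ≠ 0 :=
    Finset.prod_ne_zero_iff.mpr hjne
  have hℓne : (ℓ : ℚ_[p]) ≠ 0 := Nat.cast_ne_zero.mpr (by omega)
  rw [Finset.prod_div_distrib, div_mul_div_comm, ← hrange, ← hfacsplit,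
    eq_div_iff hfac]
  exact key

lemma aux_na_sub (a b : ℚ_[p]) : ‖a - b‖ ≤ max ‖a‖ ‖b‖ := by
  rw [sub_eq_add_neg]
  simpa using Padic.nonarchimedean a (-b)

lemma aux_prod_diff {ι : Type*} [DecidableEq ι] (s : Finset ι) (F G : ι → ℚ_[p]) (ε : ℝ)
    (hε : 0 ≤ ε)
    (hF : ∀ i ∈ s, ‖F i‖ ≤ 1) (hG : ∀ i ∈ s, ‖G i‖ ≤ 1)
    (hd : ∀ i ∈ s, ‖F i - G i‖ ≤ ε) :
    ‖(∏ i ∈ s, F i) - ∏ i ∈ s, G i‖ ≤ ε := by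
  induction s using Finset.induction_on with
  | empty => simpa using hε
  | insert a t ha ih =>
    rw [Finset.prod_insert ha, Finset.prod_insert ha]
    have hGt : ‖∏ i ∈ t, G i‖ ≤ 1 := by
      rw [norm_prod]
      exact Finset.prod_le_one (fun i _ => norm_nonneg _)
        (fun i hi => hG i (Finset.mem_insert_of_mem hi))
    have h1 : F a * ∏ i ∈ t, F i - G a * ∏ i ∈ t, G i =
        F a * ((∏ i ∈ t, F i) - ∏ i ∈ t, G i) + (F a - G a) * ∏ i ∈ t, G i := by ring
    rw [h1]
    refine le_trans (Padic.nonarchimedean _ _) (max_le ?_ ?_)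
    · rw [norm_mul]
      calc ‖F a‖ * ‖(∏ i ∈ t, F i) - ∏ i ∈ t, G i‖ ≤ 1 * ε := by
            apply mul_le_mul (hF a (Finset.mem_insert_self a t))
              (ih (fun i hi => hF i (Finset.mem_insert_of_mem hi))
                  (fun i hi => hG i (Finset.mem_insert_of_mem hi))
                  (fun i hi => hd i (Finset.mem_insert_of_mem hi)))
              (norm_nonneg _) zero_le_one
        _ = ε := one_mul ε
    · rw [norm_mul]
      calc ‖F a - G a‖ * ‖∏ i ∈ t, G i‖ ≤ ε * 1 :=
            mul_le_mul (hd a (Finset.mem_insert_self a t)) hGt (norm_nonneg _) hε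
        _ = ε := mul_one ε

end Aux

/-- For a prime `p`, `m ≥ 2`, `ℓ = r p^{m-2}` with `gcd(r,p) = 1`, `1 ≤ ℓ < (p-2)p^{m-1}`,
`s = #{j : 1 ≤ j ≤ ℓ-1, ord_p(j) = m-1}`, and `s+1 ≤ k ≤ p-1`:
`C(k p^{m-1}, ℓ) ≡ (kp/r)·(-1)^{ℓ-s-1}·Π_{j=1}^{s}(k/j - 1) mod p² ℤ_p`. -/
theorem stmt4 (p m : ℕ) [hp : Fact p.Prime] (hm : 2 ≤ m) (r ℓ s k : ℕ)
    (hr : Nat.Coprime r p) (hℓ : ℓ = r * p ^ (m - 2))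
    (h1 : 1 ≤ ℓ) (h2 : ℓ < (p - 2) * p ^ (m - 1))
    (hs : s = ((Finset.Icc 1 (ℓ - 1)).filter fun j => padicValNat p j = m - 1).card)
    (hk1 : s + 1 ≤ k) (hk2 : k ≤ p - 1) :
    ‖((k * p ^ (m - 1)).choose ℓ : ℚ_[p]) -
        (k : ℚ_[p]) * p / r * (-1) ^ (ℓ - s - 1) *
          ∏ j ∈ Finset.Icc 1 s, ((k : ℚ_[p]) / j - 1)‖ ≤ (p : ℝ) ^ (-2 : ℤ) := by
  have hpprime := hp.out
  have hp3 : 3 ≤ p := by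
    rcases Nat.lt_or_ge p 3 with h | h
    · exfalso
      have hpeq : p = 2 := by have := hpprime.two_le; omega
      subst hpeq
      simp at h2
    · exact h
  obtain ⟨m', rfl⟩ : ∃ m', m = m' + 2 := ⟨m - 2, by omega⟩
  simp only [show m' + 2 - 2 = m' from rfl, show m' + 2 - 1 = m' + 1 from rfl] at *
  have hppos : 0 < p := by omega
  have hppow : 0 < p ^ (m' + 1) := pow_pos hppos _
  have hr1 : 1 ≤ r := by
    rcases Nat.eq_zero_or_pos r with h | h
    · subst h; simp at hℓ; omega
    · exact h
  have hpr : ¬ p ∣ r := (Nat.Prime.coprime_iff_not_dvd hpprime).mp hr.symm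
  have hk0 : 1 ≤ k := by omega
  have hkp : k < p := by omega
  have hpk : ¬ p ∣ k := fun h => absurd (Nat.le_of_dvd (by omega) h) (by omega)
  obtain ⟨T, hTdef⟩ : ∃ T, T = (ℓ - 1) / p ^ (m' + 1) := ⟨_, rfl⟩
  have hTle : T < p - 2 := by
    rw [hTdef, Nat.div_lt_iff_lt_mul hppow]
    omega
  have hTℓ : T ≤ ℓ - 1 := hTdef ▸ Nat.div_le_self _ _
  have hinj : Function.Injective (fun t : ℕ => t * p ^ (m' + 1)) := fun a b h => by
    exact Nat.eq_of_mul_eq_mul_right hppow h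
  have hmem : ∀ j, (j ∈ (Finset.Icc 1 (ℓ - 1)).filter (fun j => p ^ (m' + 1) ∣ j)) ↔
      ∃ t, t ∈ Finset.Icc 1 T ∧ t * p ^ (m' + 1) = j := by
    intro j
    simp only [Finset.mem_filter, Finset.mem_Icc]
    constructor
    · rintro ⟨⟨hj1, hj2⟩, t, rfl⟩
      refine ⟨t, ⟨?_, ?_⟩, mul_comm _ _⟩
      · rcases Nat.eq_zero_or_pos t with h | h
        · subst h; simp at hj1
        · exact h
      · rw [hTdef]
        calc t = p ^ (m' + 1) * t / p ^ (m' + 1) := by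
              rw [Nat.mul_div_cancel_left _ hppow]
          _ ≤ (ℓ - 1) / p ^ (m' + 1) := Nat.div_le_div_right hj2
    · rintro ⟨t, ⟨ht1, ht2⟩, rfl⟩
      refine ⟨⟨?_, ?_⟩, Dvd.intro_left t rfl⟩
      · have : 1 * 1 ≤ t * p ^ (m' + 1) := Nat.mul_le_mul ht1 (by omega)
        omega
      · calc t * p ^ (m' + 1) ≤ T * p ^ (m' + 1) := Nat.mul_le_mul_right _ ht2
          _ ≤ ℓ - 1 := by rw [hTdef]; exact Nat.div_mul_le_self _ _
  have hfilter_eq : (Finset.Icc 1 (ℓ - 1)).filter (fun j => p ^ (m' + 1) ∣ j)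
      = (Finset.Icc 1 T).image (fun t => t * p ^ (m' + 1)) := by
    ext j
    rw [hmem]
    simp [Finset.mem_image]
  have hpnt : ∀ t, 1 ≤ t → t ≤ T → ¬ p ∣ t := by
    intro t h1t h2t hdvd
    have := Nat.le_of_dvd (by omega) hdvd
    omega
  have hval : ∀ t, 1 ≤ t → t ≤ T → padicValNat p (t * p ^ (m' + 1)) = m' + 1 := by
    intro t h1t h2t
    rw [padicValNat.mul (by omega) (by positivity), padicValNat.prime_pow,
      padicValNat.eq_zero_of_not_dvd (hpnt t h1t h2t), zero_add]
  have hfilter_eq2 : ((Finset.Icc 1 (ℓ - 1)).filter fun j => padicValNat p j = m' + 1)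
      = (Finset.Icc 1 (ℓ - 1)).filter (fun j => p ^ (m' + 1) ∣ j) := by
    apply Finset.filter_congr
    intro j hj
    simp only [Finset.mem_Icc] at hj
    constructor
    · intro h
      rw [← h]
      exact pow_padicValNat_dvd
    · intro hdvd
      have hj' : j ∈ (Finset.Icc 1 (ℓ - 1)).filter (fun j => p ^ (m' + 1) ∣ j) :=
        Finset.mem_filter.mpr ⟨Finset.mem_Icc.mpr hj, hdvd⟩
      obtain ⟨t, ht, rfl⟩ := (hmem j).mp hj'
      exact hval t (Finset.mem_Icc.mp ht).1 (Finset.mem_Icc.mp ht).2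
  have hcardT : ((Finset.Icc 1 (ℓ - 1)).filter (fun j => p ^ (m' + 1) ∣ j)).card = T := by
    rw [hfilter_eq, Finset.card_image_of_injective _ hinj, Nat.card_Icc]
    omega
  have hsT : s = T := by rw [hs, hfilter_eq2, hcardT]
  have hℓn : ℓ ≤ k * p ^ (m' + 1) := by
    have h3 := Nat.div_add_mod (ℓ - 1) (p ^ (m' + 1))
    rw [← hTdef] at h3
    have h4 := Nat.mod_lt (ℓ - 1) hppow
    have h5 : ℓ ≤ p ^ (m' + 1) * (T + 1) := by
      rw [Nat.mul_add, mul_one]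
      omega
    calc ℓ ≤ p ^ (m' + 1) * (T + 1) := h5
      _ ≤ p ^ (m' + 1) * k := Nat.mul_le_mul_left _ (by omega)
      _ = k * p ^ (m' + 1) := mul_comm _ _
  -- norms
  have hprealpos : (0 : ℝ) < p := by exact_mod_cast hppos
  have hpreal1 : (1 : ℝ) ≤ p := by exact_mod_cast hppos
  have hnk : ‖(k : ℚ_[p])‖ = 1 := aux_norm_nat_unit k hpk
  have hnr : ‖(r : ℚ_[p])‖ = 1 := aux_norm_nat_unit r hpr
  have hnn : ‖((k * p ^ (m' + 1) : ℕ) : ℚ_[p])‖ = (p : ℝ) ^ (-(m' + 1 : ℕ) : ℤ) := by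
    push_cast
    rw [norm_mul, hnk, one_mul, Padic.norm_p_pow]
    norm_num
  -- main algebraic identity
  have hA := aux_choose_prod (p := p) (k * p ^ (m' + 1)) ℓ h1 hℓn
  have hrne : (r : ℚ_[p]) ≠ 0 := Nat.cast_ne_zero.mpr (by omega)
  have hpne : (p : ℚ_[p]) ≠ 0 := Nat.cast_ne_zero.mpr (by omega)
  have hpmne : ((p : ℚ_[p])) ^ m' ≠ 0 := pow_ne_zero _ hpne
  have hhead : (((k * p ^ (m' + 1) : ℕ)) : ℚ_[p]) / (ℓ : ℚ_[p]) = (k : ℚ_[p]) * p / r := by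
    rw [hℓ]
    push_cast
    field_simp
    ring
  classical
  set G : ℕ → ℚ_[p] := fun j =>
    if p ^ (m' + 1) ∣ j then ((k : ℚ_[p]) / ((j / p ^ (m' + 1) : ℕ) : ℚ_[p]) - 1) else -1
    with hGdef
  have hGpos : ∀ t, 1 ≤ t → t ≤ T → G (t * p ^ (m' + 1)) = (k : ℚ_[p]) / t - 1 := by
    intro t h1t h2t
    simp only [hGdef]
    rw [if_pos (Dvd.intro_left t rfl), Nat.mul_div_cancel _ hppow]
  have hGneg : ∀ j, ¬ p ^ (m' + 1) ∣ j → G j = -1 := by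
    intro j hj
    simp only [hGdef]
    rw [if_neg hj]
  have hGprod : ∏ j ∈ Finset.Icc 1 (ℓ - 1), G j
      = (-1 : ℚ_[p]) ^ (ℓ - s - 1) * ∏ j ∈ Finset.Icc 1 s, ((k : ℚ_[p]) / j - 1) := by
    rw [← Finset.prod_filter_mul_prod_filter_not (Finset.Icc 1 (ℓ - 1))
      (fun j => p ^ (m' + 1) ∣ j)]
    have hpart1 : (∏ j ∈ (Finset.Icc 1 (ℓ - 1)).filter (fun j => p ^ (m' + 1) ∣ j), G j)
        = ∏ t ∈ Finset.Icc 1 s, ((k : ℚ_[p]) / t - 1) := by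
      rw [hfilter_eq, Finset.prod_image (fun a _ b _ h => hinj h), hsT]
      exact Finset.prod_congr rfl fun t ht =>
        hGpos t (Finset.mem_Icc.mp ht).1 (Finset.mem_Icc.mp ht).2
    have hpart2 : (∏ j ∈ (Finset.Icc 1 (ℓ - 1)).filter (fun j => ¬ p ^ (m' + 1) ∣ j), G j)
        = (-1 : ℚ_[p]) ^ (ℓ - s - 1) := by
      rw [Finset.prod_congr rfl (fun j hj => hGneg j (Finset.mem_filter.mp hj).2),
        Finset.prod_const]
      congr 1
      have hcc := Finset.card_filter_add_card_filter_not
        (s := Finset.Icc 1 (ℓ - 1)) (p := fun j => p ^ (m' + 1) ∣ j)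
      have hcic : (Finset.Icc 1 (ℓ - 1)).card = ℓ - 1 := by rw [Nat.card_Icc]; omega
      omega
    rw [hpart1, hpart2]
    ring
  -- estimates
  have hℓpow : ℓ - 1 < p ^ (m' + 2) := by
    have hstep : (p - 2) * p ^ (m' + 1) ≤ p * p ^ (m' + 1) :=
      Nat.mul_le_mul_right _ (by omega)
    have hpp : p * p ^ (m' + 1) = p ^ (m' + 2) := by
      rw [pow_succ]
      ring
    omega
  have hjfacts : ∀ j ∈ Finset.Icc 1 (ℓ - 1), padicValNat p j ≤ m' + 1 := by
    intro j hj
    obtain ⟨hj1, hj2⟩ := Finset.mem_Icc.mp hj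
    have hd : p ^ padicValNat p j ≤ j := Nat.le_of_dvd (by omega) pow_padicValNat_dvd
    have hlt : p ^ padicValNat p j < p ^ (m' + 2) := by omega
    have := (Nat.pow_lt_pow_iff_right (by omega : 1 < p)).mp hlt
    omega
  have hfrac : ∀ j ∈ Finset.Icc 1 (ℓ - 1),
      ‖((k * p ^ (m' + 1) : ℕ) : ℚ_[p]) / (j : ℚ_[p])‖
        = (p : ℝ) ^ ((padicValNat p j : ℤ) - (m' + 1)) := by
    intro j hj
    obtain ⟨hj1, hj2⟩ := Finset.mem_Icc.mp hj
    rw [norm_div, hnn, aux_norm_nat j (by omega), ← zpow_sub₀ (ne_of_gt hprealpos)]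
    congr 1
    push_cast
    ring
  have hFalt : ∀ j ∈ Finset.Icc 1 (ℓ - 1),
      (((k * p ^ (m' + 1) : ℕ) : ℚ_[p]) - (j : ℚ_[p])) / (j : ℚ_[p])
        = ((k * p ^ (m' + 1) : ℕ) : ℚ_[p]) / (j : ℚ_[p]) - 1 := by
    intro j hj
    obtain ⟨hj1, _⟩ := Finset.mem_Icc.mp hj
    have hne : (j : ℚ_[p]) ≠ 0 := Nat.cast_ne_zero.mpr (by omega)
    rw [sub_div, div_self hne]
  have hzle : ∀ e e' : ℤ, e ≤ e' → (p : ℝ) ^ e ≤ (p : ℝ) ^ e' := fun e e' he =>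
    zpow_le_zpow_right₀ hpreal1 he
  have hzle1 : ∀ e : ℤ, e ≤ 0 → (p : ℝ) ^ e ≤ 1 := fun e he => by
    calc (p : ℝ) ^ e ≤ (p : ℝ) ^ (0 : ℤ) := hzle e 0 he
      _ = 1 := zpow_zero _
  have hFle : ∀ j ∈ Finset.Icc 1 (ℓ - 1),
      ‖(fun j => (((k * p ^ (m' + 1) : ℕ) : ℚ_[p]) - (j : ℚ_[p])) / (j : ℚ_[p])) j‖ ≤ 1 := by
    intro j hj
    simp only
    rw [hFalt j hj]
    refine le_trans (aux_na_sub _ _) (max_le ?_ ?_)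
    · rw [hfrac j hj]
      apply hzle1
      have := hjfacts j hj
      omega
    · rw [norm_one]
  have hGle : ∀ j ∈ Finset.Icc 1 (ℓ - 1), ‖G j‖ ≤ 1 := by
    intro j hj
    by_cases hdvd : p ^ (m' + 1) ∣ j
    · obtain ⟨t, ht, rfl⟩ := (hmem j).mp (Finset.mem_filter.mpr ⟨hj, hdvd⟩)
      obtain ⟨ht1, ht2⟩ := Finset.mem_Icc.mp ht
      rw [hGpos t ht1 ht2]
      refine le_trans (aux_na_sub _ _) (max_le ?_ ?_)
      · rw [norm_div, hnk, aux_norm_nat_unit t (hpnt t ht1 ht2)]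
        norm_num
      · rw [norm_one]
    · rw [hGneg j hdvd]
      rw [norm_neg, norm_one]
  have hFGle : ∀ j ∈ Finset.Icc 1 (ℓ - 1),
      ‖(fun j => (((k * p ^ (m' + 1) : ℕ) : ℚ_[p]) - (j : ℚ_[p])) / (j : ℚ_[p])) j - G j‖
        ≤ (p : ℝ) ^ (-1 : ℤ) := by
    intro j hj
    simp only
    by_cases hdvd : p ^ (m' + 1) ∣ j
    · obtain ⟨t, ht, rfl⟩ := (hmem j).mp (Finset.mem_filter.mpr ⟨hj, hdvd⟩)
      obtain ⟨ht1, ht2⟩ := Finset.mem_Icc.mp ht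
      have htne : (t : ℚ_[p]) ≠ 0 := Nat.cast_ne_zero.mpr (by omega)
      have hpMne : ((p : ℚ_[p])) ^ (m' + 1) ≠ 0 := pow_ne_zero _ hpne
      have heq : (((k * p ^ (m' + 1) : ℕ) : ℚ_[p]) - ((t * p ^ (m' + 1) : ℕ) : ℚ_[p]))
            / ((t * p ^ (m' + 1) : ℕ) : ℚ_[p]) = G (t * p ^ (m' + 1)) := by
        rw [hGpos t ht1 ht2]
        push_cast
        field_simp
      rw [heq, sub_self, norm_zero]
      positivity
    · have heq : (((k * p ^ (m' + 1) : ℕ) : ℚ_[p]) - (j : ℚ_[p])) / (j : ℚ_[p]) - G j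
          = ((k * p ^ (m' + 1) : ℕ) : ℚ_[p]) / (j : ℚ_[p]) := by
        rw [hFalt j hj, hGneg j hdvd]
        ring
      rw [heq, hfrac j hj]
      apply hzle
      have h5 := hjfacts j hj
      have h6 : padicValNat p j ≠ m' + 1 := fun h => hdvd (h ▸ pow_padicValNat_dvd)
      omega
  have hmain := aux_prod_diff (Finset.Icc 1 (ℓ - 1))
    (fun j => (((k * p ^ (m' + 1) : ℕ) : ℚ_[p]) - (j : ℚ_[p])) / (j : ℚ_[p])) G
    ((p : ℝ) ^ (-1 : ℤ)) (by positivity) hFle hGle hFGle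
  have hhn : ‖(k : ℚ_[p]) * p / r‖ = (p : ℝ) ^ (-1 : ℤ) := by
    rw [norm_div, norm_mul, hnk, hnr, one_mul, div_one, Padic.norm_p, zpow_neg_one]
  have hsplit : ((k * p ^ (m' + 1)).choose ℓ : ℚ_[p]) -
      (k : ℚ_[p]) * p / r * (-1) ^ (ℓ - s - 1) * ∏ j ∈ Finset.Icc 1 s, ((k : ℚ_[p]) / j - 1)
      = ((k : ℚ_[p]) * p / r) *
        ((∏ j ∈ Finset.Icc 1 (ℓ - 1),
            ((((k * p ^ (m' + 1) : ℕ)) : ℚ_[p]) - (j : ℚ_[p])) / (j : ℚ_[p]))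
          - ∏ j ∈ Finset.Icc 1 (ℓ - 1), G j) := by
    rw [hA, hhead, hGprod]
    ring
  rw [hsplit, norm_mul, hhn]
  refine le_trans (mul_le_mul_of_nonneg_left hmain (by positivity)) ?_
  rw [← zpow_add₀ (ne_of_gt hprealpos)]
  norm_num
end

section
/- Let p be an odd prime, m ≥ 2, t an integer with 1 ≤ t ≤ p−2, and k an integer with t ≤ k ≤ p−1. Then C(k p^{m-1}, t p^{m-1}) ≡ C(k, t) · (1 − k p C) mod p^2 ℤ_p, where C = Σ_{1 ≤ j ≤ tp−1, p∤j} 1/j ∈ ℤ_p. In particular C(k p^{m-1}, t p^{m-1}) ≡ C(k, t) mod p^2 ℤ_p. -/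
open Finset

section AuxStmt7

variable {p : ℕ} [hp : Fact p.Prime]

private lemma aux_norm_nat_le_one (n : ℕ) : ‖(n : ℚ_[p])‖ ≤ 1 := by
  simpa using Padic.norm_int_le_one (p := p) (n : ℤ)

private lemma aux_norm_nat_eq_one {n : ℕ} (h : ¬ p ∣ n) : ‖(n : ℚ_[p])‖ = 1 := by
  refine le_antisymm (aux_norm_nat_le_one n) ?_
  by_contra hlt
  push_neg at hlt
  have : ‖((n : ℤ) : ℚ_[p])‖ < 1 := by simpa using hlt
  rw [Padic.norm_intCast_lt_one_iff] at this
  exact h (by exact_mod_cast this)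

private lemma aux_norm_p_mul_le (n : ℕ) : ‖((n : ℚ_[p]) * p)‖ ≤ (p : ℝ) ^ (-1 : ℤ) := by
  rw [norm_mul, Padic.norm_p]
  have h1 : ‖(n : ℚ_[p])‖ ≤ 1 := aux_norm_nat_le_one n
  have hp0 : (0:ℝ) < p := by exact_mod_cast hp.out.pos
  calc ‖(n : ℚ_[p])‖ * ((p:ℝ))⁻¹ ≤ 1 * ((p:ℝ))⁻¹ := by
        apply mul_le_mul_of_nonneg_right h1 (by positivity)
    _ = (p : ℝ) ^ (-1 : ℤ) := by rw [one_mul, zpow_neg_one]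

private lemma aux_eps_sq : ((p : ℝ) ^ (-1 : ℤ)) ^ 2 = (p : ℝ) ^ (-2 : ℤ) := by
  have hp0 : (p : ℝ) ≠ 0 := by exact_mod_cast hp.out.pos.ne'
  rw [← zpow_natCast ((p:ℝ) ^ (-1:ℤ)) 2, ← zpow_mul]
  norm_num

private lemma aux_eps_le_one : (p : ℝ) ^ (-1 : ℤ) ≤ 1 := by
  rw [zpow_neg_one]
  have : (1:ℝ) ≤ p := by exact_mod_cast hp.out.one_lt.le
  exact inv_le_one_of_one_le₀ this

private lemma aux_harmonic (hodd : Odd p) (b : ℕ) :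
    ‖∑ j ∈ (Icc 1 (b * p)).filter (fun j => ¬ p ∣ j), (1 / (j : ℚ_[p]))‖
      ≤ (p : ℝ) ^ (-1 : ℤ) := by
  set N := b * p with hN
  have hpN : p ∣ N := ⟨b, by rw [hN, mul_comm]⟩
  set s := (Icc 1 N).filter (fun j => ¬ p ∣ j) with hs
  have hmem : ∀ j ∈ s, 1 ≤ j ∧ j < N ∧ ¬ p ∣ j := by
    intro j hj
    rw [hs, mem_filter, mem_Icc] at hj
    refine ⟨hj.1.1, ?_, hj.2⟩
    rcases lt_or_eq_of_le hj.1.2 with h | h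
    · exact h
    · exact absurd (h ▸ hpN) hj.2
  have hmaps : ∀ j ∈ s, N - j ∈ s := by
    intro j hj
    obtain ⟨h1, h2, h3⟩ := hmem j hj
    rw [hs, mem_filter, mem_Icc]
    refine ⟨⟨by omega, by omega⟩, fun hdvd => h3 ?_⟩
    have : p ∣ N - (N - j) := (Nat.dvd_sub hpN hdvd)
    simpa [Nat.sub_sub_self (le_of_lt h2)] using this
  set S := ∑ j ∈ s, (1 / (j : ℚ_[p])) with hS
  have hre : S = ∑ j ∈ s, (1 / ((N - j : ℕ) : ℚ_[p])) := by
    rw [hS]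
    refine (Finset.sum_nbij' (fun j => N - j) (fun j => N - j) ?_ ?_ ?_ ?_ ?_).symm
    · exact hmaps
    · exact hmaps
    · intro j hj; exact Nat.sub_sub_self (le_of_lt (hmem j hj).2.1)
    · intro j hj; exact Nat.sub_sub_self (le_of_lt (hmem j hj).2.1)
    · intro j hj; rfl
  have h2S : (2 : ℚ_[p]) * S = ∑ j ∈ s, ((N : ℚ_[p]) / (j * (N - j : ℕ))) := by
    rw [two_mul]
    nth_rewrite 2 [hre]
    rw [← Finset.sum_add_distrib]
    refine Finset.sum_congr rfl ?_
    intro j hj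
    obtain ⟨h1, h2, h3⟩ := hmem j hj
    have hj0 : (j : ℚ_[p]) ≠ 0 := Nat.cast_ne_zero.2 (by omega)
    have hNj0 : ((N - j : ℕ) : ℚ_[p]) ≠ 0 := Nat.cast_ne_zero.2 (by omega)
    have hcast : ((N - j : ℕ) : ℚ_[p]) = (N : ℚ_[p]) - j := by
      push_cast [Nat.cast_sub (le_of_lt h2)]; ring
    field_simp
    rw [hcast]; ring
  have h2norm : ‖(2 : ℚ_[p])‖ = 1 := by
    have : ¬ p ∣ 2 := by
      intro h
      have hp2 : p = 2 := (Nat.prime_dvd_prime_iff_eq hp.out Nat.prime_two).mp h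
      rw [hp2] at hodd
      exact (by norm_num : ¬ Odd 2) hodd
    simpa using aux_norm_nat_eq_one (p := p) this
  have hbound : ‖∑ j ∈ s, ((N : ℚ_[p]) / (j * (N - j : ℕ)))‖ ≤ (p : ℝ) ^ (-1 : ℤ) := by
    apply IsUltrametricDist.norm_sum_le_of_forall_le_of_nonneg
    · positivity
    · intro j hj
      obtain ⟨h1, h2, h3⟩ := hmem j hj
      have hjn : ‖(j : ℚ_[p])‖ = 1 := aux_norm_nat_eq_one h3
      have hNjn : ‖((N - j : ℕ) : ℚ_[p])‖ = 1 := by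
        apply aux_norm_nat_eq_one
        intro hdvd
        exact h3 (by simpa [Nat.sub_sub_self (le_of_lt h2)] using Nat.dvd_sub hpN hdvd)
      rw [norm_div, norm_mul, hjn, hNjn, mul_one, div_one]
      have : (N : ℚ_[p]) = (b : ℚ_[p]) * p := by push_cast [hN]; ring
      rw [this]
      exact aux_norm_p_mul_le b
  calc ‖S‖ = ‖(2 : ℚ_[p])‖ * ‖S‖ := by rw [h2norm, one_mul]
    _ = ‖(2 : ℚ_[p]) * S‖ := (norm_mul _ _).symm
    _ ≤ (p : ℝ) ^ (-1 : ℤ) := by rw [h2S]; exact hbound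

private lemma aux_choose_prod_s7 (m r : ℕ) :
    (((m + r).choose m : ℚ_[p])) = ∏ j ∈ Icc 1 m, (((r : ℚ_[p]) + j) / j) := by
  induction m with
  | zero => simp
  | succ n ih =>
    rw [Finset.prod_Icc_succ_top (by omega), ← ih]
    have key : (n + r + 1) * (n + r).choose n = (n + 1 + r).choose (n + 1) * (n + 1) := by
      have := Nat.add_one_mul_choose_eq (n + r) n
      simpa [Nat.succ_eq_add_one, Nat.add_right_comm] using this
    have hcast : ((n:ℚ_[p]) + r + 1) * ((n + r).choose n : ℚ_[p])
        = ((n + 1 + r).choose (n + 1) : ℚ_[p]) * ((n:ℚ_[p]) + 1) := by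
      exact_mod_cast congrArg (Nat.cast : ℕ → ℚ_[p]) key
    have hn1 : ((n : ℚ_[p]) + 1) ≠ 0 := by
      exact_mod_cast (Nat.cast_ne_zero (R := ℚ_[p])).2 (Nat.succ_ne_zero n)
    push_cast
    rw [mul_div_assoc', eq_div_iff hn1]
    linear_combination -hcast

private lemma aux_prod_approx {ι : Type*} (s : Finset ι) (x : ι → ℚ_[p]) (ε : ℝ)
    (hε0 : 0 ≤ ε) (hε1 : ε ≤ 1) (hx : ∀ i ∈ s, ‖x i‖ ≤ ε) :
    ‖∏ i ∈ s, (1 + x i) - 1‖ ≤ ε ∧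
      ‖∏ i ∈ s, (1 + x i) - 1 - ∑ i ∈ s, x i‖ ≤ ε ^ 2 := by
  induction s using Finset.cons_induction with
  | empty =>
    refine ⟨by simpa using hε0, by simpa using pow_nonneg hε0 2⟩
  | cons a s ha ih =>
    obtain ⟨ih1, ih2⟩ := ih (fun i hi => hx i (Finset.mem_cons_of_mem hi))
    have hxa : ‖x a‖ ≤ ε := hx a (Finset.mem_cons_self a s)
    set P := ∏ i ∈ s, (1 + x i) with hP
    set S := ∑ i ∈ s, x i with hS
    have hPn : ‖P‖ ≤ 1 := by
      have : P = (P - 1) + 1 := by ring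
      rw [this]
      refine le_trans (IsUltrametricDist.norm_add_le_max _ _) ?_
      simp only [norm_one]
      exact max_le (le_trans ih1 hε1) le_rfl
    rw [Finset.prod_cons, Finset.sum_cons]
    constructor
    · have e1 : (1 + x a) * P - 1 = (P - 1) + x a * P := by ring
      rw [e1]
      refine le_trans (IsUltrametricDist.norm_add_le_max _ _) (max_le ih1 ?_)
      rw [norm_mul]
      calc ‖x a‖ * ‖P‖ ≤ ε * 1 := mul_le_mul hxa hPn (norm_nonneg _) hε0
        _ = ε := mul_one ε
    · have e2 : (1 + x a) * P - 1 - (x a + S) = (P - 1 - S) + x a * (P - 1) := by ring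
      rw [e2]
      refine le_trans (IsUltrametricDist.norm_add_le_max _ _) (max_le ih2 ?_)
      rw [norm_mul, sq]
      exact mul_le_mul hxa ih1 (norm_nonneg _) hε0

private lemma aux_step (hodd : Odd p) {a b : ℕ} (hb : 1 ≤ b) (hab : b ≤ a) :
    ‖((a * p).choose (b * p) : ℚ_[p]) - (a.choose b : ℚ_[p])‖ ≤ (p : ℝ) ^ (-2 : ℤ) := by
  have hp0 : 0 < p := hp.out.pos
  have hpQ : (p : ℚ_[p]) ≠ 0 := Nat.cast_ne_zero.2 hp0.ne'
  set r := a - b with hr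
  have har : a = b + r := by omega
  have e1 : ((a * p).choose (b * p) : ℚ_[p])
      = ∏ j ∈ Icc 1 (b * p), (((r * p : ℕ) : ℚ_[p]) + j) / j := by
    have : a * p = b * p + r * p := by rw [har]; ring
    rw [this]
    exact aux_choose_prod_s7 (b * p) (r * p)
  rw [← Finset.prod_filter_mul_prod_filter_not (Icc 1 (b * p)) (fun j => p ∣ j)] at e1
  have ediv : ∏ j ∈ (Icc 1 (b * p)).filter (fun j => p ∣ j),
      ((((r * p : ℕ) : ℚ_[p]) + j) / j) = (a.choose b : ℚ_[p]) := by
    have : ∏ j ∈ (Icc 1 (b * p)).filter (fun j => p ∣ j),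
        ((((r * p : ℕ) : ℚ_[p]) + j) / j)
        = ∏ i ∈ Icc 1 b, (((r : ℚ_[p]) + i) / i) := by
      refine Finset.prod_nbij' (fun j => j / p) (fun i => p * i) ?_ ?_ ?_ ?_ ?_
      · intro j hj
        rw [mem_filter, mem_Icc] at hj
        obtain ⟨⟨hj1, hj2⟩, c, hc⟩ := hj
        subst hc
        rw [mem_Icc, Nat.mul_div_cancel_left _ hp0]
        constructor
        · exact Nat.pos_of_ne_zero fun h0 => by simp [h0] at hj1
        · have hj2' : p * c ≤ p * b := by rw [mul_comm p b]; exact hj2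
          exact Nat.le_of_mul_le_mul_left hj2' hp0
      · intro i hi
        rw [mem_Icc] at hi
        rw [mem_filter, mem_Icc]
        refine ⟨⟨Nat.mul_pos hp0 (by omega), ?_⟩, ⟨i, rfl⟩⟩
        calc p * i ≤ p * b := Nat.mul_le_mul_left p hi.2
          _ = b * p := mul_comm p b
      · intro j hj
        rw [mem_filter] at hj
        obtain ⟨_, c, hc⟩ := hj
        subst hc
        rw [Nat.mul_div_cancel_left _ hp0]
      · intro i hi
        rw [Nat.mul_div_cancel_left _ hp0]
      · intro j hj
        rw [mem_filter, mem_Icc] at hj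
        obtain ⟨⟨hj1, hj2⟩, c, hc⟩ := hj
        subst hc
        rw [Nat.mul_div_cancel_left _ hp0]
        have hc1 : 1 ≤ c := Nat.pos_of_ne_zero fun h0 => by simp [h0] at hj1
        have hcQ : ((p * c : ℕ) : ℚ_[p]) = (p : ℚ_[p]) * c := by push_cast; ring
        have hrpQ : ((r * p : ℕ) : ℚ_[p]) = (r : ℚ_[p]) * p := by push_cast; ring
        rw [hcQ, hrpQ]
        have hcQ0 : (c : ℚ_[p]) ≠ 0 := Nat.cast_ne_zero.2 (by omega)
        field_simp
    rw [this, ← aux_choose_prod_s7 b r, ← har]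
  set s' := (Icc 1 (b * p)).filter (fun j => ¬ p ∣ j) with hs'
  have hndvd : ∀ j ∈ s', ¬ p ∣ j ∧ 1 ≤ j := by
    intro j hj
    rw [hs', mem_filter, mem_Icc] at hj
    exact ⟨hj.2, hj.1.1⟩
  set x : ℕ → ℚ_[p] := fun j => ((r * p : ℕ) : ℚ_[p]) / j with hx
  have endiv : ∏ j ∈ s', ((((r * p : ℕ) : ℚ_[p]) + j) / j) = ∏ j ∈ s', (1 + x j) := by
    refine Finset.prod_congr rfl ?_
    intro j hj
    have hj0 : (j : ℚ_[p]) ≠ 0 :=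
      Nat.cast_ne_zero.2 (Nat.one_le_iff_ne_zero.1 (hndvd j hj).2)
    rw [hx]
    dsimp only
    rw [add_div, div_self hj0, add_comm]
  set ε : ℝ := (p : ℝ) ^ (-1 : ℤ) with hε
  have hε0 : 0 ≤ ε := by positivity
  have hεx : ∀ j ∈ s', ‖x j‖ ≤ ε := by
    intro j hj
    rw [hx]
    simp only
    rw [norm_div, aux_norm_nat_eq_one (hndvd j hj).1, div_one]
    have : ((r * p : ℕ) : ℚ_[p]) = (r : ℚ_[p]) * p := by push_cast; ring
    rw [this]
    exact aux_norm_p_mul_le r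
  obtain ⟨hP1, hP2⟩ := aux_prod_approx s' x ε hε0 aux_eps_le_one hεx
  have hSsum : ∑ j ∈ s', x j = ((r * p : ℕ) : ℚ_[p]) * ∑ j ∈ s', (1 / (j : ℚ_[p])) := by
    rw [Finset.mul_sum]
    refine Finset.sum_congr rfl fun j hj => ?_
    rw [hx]; simp [div_eq_mul_inv]
  have hSnorm : ‖∑ j ∈ s', x j‖ ≤ (p : ℝ) ^ (-2 : ℤ) := by
    rw [hSsum, norm_mul]
    have h1 : ‖((r * p : ℕ) : ℚ_[p])‖ ≤ ε := by
      have : ((r * p : ℕ) : ℚ_[p]) = (r : ℚ_[p]) * p := by push_cast; ring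
      rw [this]; exact aux_norm_p_mul_le r
    have h2 : ‖∑ j ∈ s', (1 / (j : ℚ_[p]))‖ ≤ ε := aux_harmonic hodd b
    calc ‖((r * p : ℕ) : ℚ_[p])‖ * ‖∑ j ∈ s', (1 / (j : ℚ_[p]))‖ ≤ ε * ε :=
          mul_le_mul h1 h2 (norm_nonneg _) hε0
      _ = ε ^ 2 := (sq ε).symm
      _ = (p : ℝ) ^ (-2 : ℤ) := aux_eps_sq
  have hProd1 : ‖∏ j ∈ s', (1 + x j) - 1‖ ≤ (p : ℝ) ^ (-2 : ℤ) := by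
    have : ∏ j ∈ s', (1 + x j) - 1 = (∏ j ∈ s', (1 + x j) - 1 - ∑ j ∈ s', x j)
        + ∑ j ∈ s', x j := by ring
    rw [this]
    refine le_trans (IsUltrametricDist.norm_add_le_max _ _) (max_le ?_ hSnorm)
    rw [← aux_eps_sq]; exact hP2
  rw [e1, ediv, endiv]
  have : (a.choose b : ℚ_[p]) * ∏ j ∈ s', (1 + x j) - (a.choose b : ℚ_[p])
      = (a.choose b : ℚ_[p]) * (∏ j ∈ s', (1 + x j) - 1) := by ring
  rw [this, norm_mul]
  calc ‖(a.choose b : ℚ_[p])‖ * ‖∏ j ∈ s', (1 + x j) - 1‖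
      ≤ 1 * ((p : ℝ) ^ (-2 : ℤ)) :=
        mul_le_mul (aux_norm_nat_le_one _) hProd1 (norm_nonneg _) zero_le_one
    _ = (p : ℝ) ^ (-2 : ℤ) := one_mul _

private lemma aux_iter (hodd : Odd p) {t k : ℕ} (ht : 1 ≤ t) (hk : t ≤ k) (e : ℕ) :
    ‖((k * p ^ e).choose (t * p ^ e) : ℚ_[p]) - (k.choose t : ℚ_[p])‖
      ≤ (p : ℝ) ^ (-2 : ℤ) := by
  induction e with
  | zero =>
    simp only [pow_zero, mul_one, sub_self, norm_zero]
    positivity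
  | succ n ih =>
    have hstep := aux_step (p := p) hodd (a := k * p ^ n) (b := t * p ^ n)
      (Nat.mul_pos (by omega) (pow_pos hp.out.pos n))
      (Nat.mul_le_mul_right _ hk)
    have e1 : k * p ^ n * p = k * p ^ (n + 1) := by ring
    have e2 : t * p ^ n * p = t * p ^ (n + 1) := by ring
    rw [e1, e2] at hstep
    have : ((k * p ^ (n + 1)).choose (t * p ^ (n + 1)) : ℚ_[p]) - (k.choose t : ℚ_[p])
        = (((k * p ^ (n + 1)).choose (t * p ^ (n + 1)) : ℚ_[p])
            - ((k * p ^ n).choose (t * p ^ n) : ℚ_[p]))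
          + (((k * p ^ n).choose (t * p ^ n) : ℚ_[p]) - (k.choose t : ℚ_[p])) := by ring
    rw [this]
    exact le_trans (IsUltrametricDist.norm_add_le_max _ _) (max_le hstep ih)

end AuxStmt7

/-- For an odd prime `p`, `m ≥ 2`, `1 ≤ t ≤ p-2` and `t ≤ k ≤ p-1`:
`C(k p^{m-1}, t p^{m-1}) ≡ C(k,t)·(1 - kpC) mod p² ℤ_p` where
`C = Σ_{1 ≤ j ≤ tp-1, p∤j} 1/j ∈ ℤ_p`; in particular
`C(k p^{m-1}, t p^{m-1}) ≡ C(k,t) mod p² ℤ_p`. -/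
theorem stmt7 (p m : ℕ) [hp : Fact p.Prime] (hodd : Odd p) (hm : 2 ≤ m)
    (t k : ℕ) (ht1 : 1 ≤ t) (ht2 : t ≤ p - 2) (hk1 : t ≤ k) (hk2 : k ≤ p - 1) :
    ‖((k * p ^ (m - 1)).choose (t * p ^ (m - 1)) : ℚ_[p]) -
        (k.choose t : ℚ_[p]) * (1 - (k : ℚ_[p]) * p *
          ∑ j ∈ (Finset.Icc 1 (t * p - 1)).filter (fun j => ¬ p ∣ j), (1 / (j : ℚ_[p])))‖
      ≤ (p : ℝ) ^ (-2 : ℤ) ∧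
    ‖((k * p ^ (m - 1)).choose (t * p ^ (m - 1)) : ℚ_[p]) - (k.choose t : ℚ_[p])‖
      ≤ (p : ℝ) ^ (-2 : ℤ) := by
  have hmain := aux_iter (p := p) hodd ht1 hk1 (m - 1)
  refine ⟨?_, hmain⟩
  have hsetseq : (Finset.Icc 1 (t * p - 1)).filter (fun j => ¬ p ∣ j)
      = (Finset.Icc 1 (t * p)).filter (fun j => ¬ p ∣ j) := by
    ext j
    simp only [mem_filter, mem_Icc]
    constructor
    · rintro ⟨⟨h1, h2⟩, h3⟩
      exact ⟨⟨h1, by omega⟩, h3⟩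
    · rintro ⟨⟨h1, h2⟩, h3⟩
      refine ⟨⟨h1, ?_⟩, h3⟩
      have : j ≠ t * p := fun h => h3 (h ▸ dvd_mul_left p t)
      omega
  set Csum := ∑ j ∈ (Finset.Icc 1 (t * p - 1)).filter (fun j => ¬ p ∣ j), (1 / (j : ℚ_[p]))
    with hC
  have hCnorm : ‖Csum‖ ≤ (p : ℝ) ^ (-1 : ℤ) := by
    rw [hC, hsetseq]
    exact aux_harmonic hodd t
  have hsplit : ((k * p ^ (m - 1)).choose (t * p ^ (m - 1)) : ℚ_[p]) -
      (k.choose t : ℚ_[p]) * (1 - (k : ℚ_[p]) * p * Csum)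
      = (((k * p ^ (m - 1)).choose (t * p ^ (m - 1)) : ℚ_[p]) - (k.choose t : ℚ_[p]))
        + (k.choose t : ℚ_[p]) * ((k : ℚ_[p]) * p * Csum) := by ring
  rw [hsplit]
  refine le_trans (IsUltrametricDist.norm_add_le_max _ _) (max_le hmain ?_)
  rw [norm_mul, norm_mul]
  have h1 : ‖(k.choose t : ℚ_[p])‖ ≤ 1 := aux_norm_nat_le_one _
  have h2 : ‖(k : ℚ_[p]) * p‖ ≤ (p : ℝ) ^ (-1 : ℤ) := aux_norm_p_mul_le k
  have hε0 : (0:ℝ) ≤ (p : ℝ) ^ (-1 : ℤ) := by positivity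
  calc ‖(k.choose t : ℚ_[p])‖ * (‖(k : ℚ_[p]) * p‖ * ‖Csum‖)
      ≤ 1 * ((p : ℝ) ^ (-1 : ℤ) * (p : ℝ) ^ (-1 : ℤ)) := by
        apply mul_le_mul h1 (mul_le_mul h2 hCnorm (norm_nonneg _) hε0) (by positivity)
          zero_le_one
    _ = (p : ℝ) ^ (-2 : ℤ) := by rw [one_mul, ← sq, aux_eps_sq]
end

section
/- Let p be an odd prime, m ≥ 2, and ℓ = t p^{m-1} with 1 ≤ t ≤ p−2. Then a_ℓ = Σ_{k=t}^{p-1} C(k p^{m-1}, ℓ) ≡ (−1)^t · p/(t+1) mod p^2 ℤ_p. -/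
open Polynomial

lemma sq_zero_add_pow {R : Type*} [CommRing R] {a b : R} (hb : b * b = 0) (n : ℕ) :
    (a + b) ^ (n + 1) = a ^ (n + 1) + ((n : R) + 1) * a ^ n * b := by
  induction n with
  | zero => ring
  | succ n ih =>
    have h : (a + b) ^ (n + 2) = (a + b) ^ (n + 1) * (a + b) := by ring
    rw [h, ih]
    push_cast
    linear_combination ((n : R) + 1) * a ^ n * hb

lemma ljunggren (p : ℕ) (hp : p.Prime) (a b : ℕ) (ha : 1 ≤ a) :
    (((a * p).choose (b * p) : ZMod (p ^ 2)) = (a.choose b : ZMod (p ^ 2))) := by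
  set R := ZMod (p ^ 2)
  set A : R[X] := Polynomial.expand R p (X + 1) with hAdef
  set F : R[X] := (X + 1) ^ p - A with hFdef
  have hAcoeff : ∀ j : ℕ, A.coeff j = if p ∣ j then ((Nat.choose 1 (j / p) : R)) else 0 := by
    intro j
    rw [hAdef, Polynomial.coeff_expand hp.pos]
    congr 1
    rw [← pow_one (X + 1 : R[X]), Polynomial.coeff_X_add_one_pow]
  have hF0 : ∀ j : ℕ, p ∣ j → F.coeff j = 0 := by
    rintro j ⟨c, rfl⟩
    rw [hFdef, Polynomial.coeff_sub, Polynomial.coeff_X_add_one_pow, hAcoeff,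
      if_pos ⟨c, rfl⟩, Nat.mul_div_cancel_left c hp.pos]
    match c with
    | 0 => simp
    | 1 => simp
    | (c + 2) =>
      have h1 : p.choose (p * (c + 2)) = 0 :=
        Nat.choose_eq_zero_of_lt (by nlinarith [hp.pos])
      have h2 : Nat.choose 1 (c + 2) = 0 := Nat.choose_eq_zero_of_lt (by omega)
      rw [h1, h2]; simp
  have hFdvd : ∀ j : ℕ, (p : R) ∣ F.coeff j := by
    intro j
    by_cases hj : p ∣ j
    · rw [hF0 j hj]; exact dvd_zero _
    · rw [hFdef, Polynomial.coeff_sub, Polynomial.coeff_X_add_one_pow, hAcoeff, if_neg hj,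
        sub_zero]
      rcases lt_trichotomy j p with h | h | h
      · have hj0 : j ≠ 0 := by rintro rfl; exact hj (dvd_zero p)
        obtain ⟨c, hc⟩ := hp.dvd_choose_self hj0 h
        exact ⟨(c : R), by rw [hc]; push_cast; ring⟩
      · exact absurd (h ▸ dvd_refl p) hj
      · rw [Nat.choose_eq_zero_of_lt h]; simp
  have hFF : F * F = 0 := by
    obtain ⟨G, hG⟩ := (Polynomial.C_dvd_iff_dvd_coeff _ _).mpr hFdvd
    have hpp : (Polynomial.C (p : R)) * Polynomial.C (p : R) = 0 := by
      rw [← Polynomial.C_mul, ← Nat.cast_mul, ← pow_two, ZMod.natCast_self, Polynomial.C_0]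
    calc F * F = (Polynomial.C (p : R) * Polynomial.C (p : R)) * (G * G) := by rw [hG]; ring
    _ = 0 := by rw [hpp, zero_mul]
  obtain ⟨a', rfl⟩ : ∃ a', a = a' + 1 := ⟨a - 1, (Nat.succ_pred_eq_of_pos ha).symm⟩
  have key : ((X + 1 : R[X])) ^ ((a' + 1) * p)
      = A ^ (a' + 1) + Polynomial.C ((a' : R) + 1) * A ^ a' * F := by
    have h1 : ((X + 1 : R[X])) ^ ((a' + 1) * p) = (A + F) ^ (a' + 1) := by
      rw [hFdef, add_sub_cancel, mul_comm, pow_mul]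
    rw [h1, sq_zero_add_pow hFF a']
    simp [Polynomial.C_add, Polynomial.C_1, Polynomial.C_eq_natCast]
  have hkey := congrArg (fun f : R[X] => f.coeff (b * p)) key
  have hApow : ∀ (c : ℕ), (A ^ c).coeff (b * p) = (c.choose b : R) := by
    intro c
    rw [hAdef, ← map_pow, Polynomial.coeff_expand hp.pos, if_pos ⟨b, mul_comm b p⟩,
      Nat.mul_div_cancel b hp.pos, Polynomial.coeff_X_add_one_pow]
  have hzero : (A ^ a' * F).coeff (b * p) = 0 := by
    rw [Polynomial.coeff_mul]
    apply Finset.sum_eq_zero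
    rintro ⟨i, j⟩ hij
    simp only [Finset.HasAntidiagonal.mem_antidiagonal] at hij
    by_cases hi : p ∣ i
    · have hj : p ∣ j := by
        have h2 : j = b * p - i := by omega
        rw [h2]; exact Nat.dvd_sub ⟨b, mul_comm b p⟩ hi
      rw [hF0 j hj, mul_zero]
    · have : (A ^ a').coeff i = 0 := by
        rw [hAdef, ← map_pow, Polynomial.coeff_expand hp.pos, if_neg hi]
      rw [this, zero_mul]
  simp only [Polynomial.coeff_add, Polynomial.coeff_X_add_one_pow, mul_assoc,
    Polynomial.coeff_C_mul] at hkey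
  rw [hzero, mul_zero, add_zero, hApow] at hkey
  exact hkey

lemma ljunggren_pow (p : ℕ) (hp : p.Prime) (a b : ℕ) (ha : 1 ≤ a) (j : ℕ) :
    ((a * p ^ j).choose (b * p ^ j) : ZMod (p ^ 2)) = (a.choose b : ZMod (p ^ 2)) := by
  induction j with
  | zero => simp
  | succ j ih =>
    have h1 : a * p ^ (j + 1) = (a * p ^ j) * p := by ring
    have h2 : b * p ^ (j + 1) = (b * p ^ j) * p := by ring
    rw [h1, h2, ljunggren p hp _ _ (Nat.mul_pos ha (pow_pos hp.pos j))]
    exact ih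

lemma choose_pred (p : ℕ) (hp : p.Prime) :
    ∀ t : ℕ, t ≤ p - 1 → ((p - 1).choose t : ZMod p) = (-1) ^ t := by
  intro t
  induction t with
  | zero => intro _; simp
  | succ t ih =>
    intro ht
    have ht' : t ≤ p - 1 := by omega
    have hlt : t + 1 < p := by have := hp.two_le; omega
    have h0 : ((p.choose (t + 1) : ZMod p)) = 0 :=
      (ZMod.natCast_eq_zero_iff _ _).mpr
        (hp.dvd_choose_self (Nat.succ_ne_zero t) hlt)
    have hrec : (p - 1).choose t + (p - 1).choose (t + 1) = p.choose (t + 1) := by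
      have hp1 : p - 1 + 1 = p := Nat.succ_pred_eq_of_pos hp.pos
      have h := (Nat.choose_succ_succ (p - 1) t).symm
      simp only [Nat.succ_eq_add_one] at h
      rwa [hp1] at h
    have hsum : ((p - 1).choose t : ZMod p) + ((p - 1).choose (t + 1) : ZMod p) = 0 := by
      rw [← Nat.cast_add, hrec, h0]
    rw [ih ht'] at hsum
    rw [pow_succ]
    linear_combination hsum

/-- For an odd prime `p`, `m ≥ 2`, and `ℓ = t p^{m-1}` with `1 ≤ t ≤ p-2`:
`a_ℓ = Σ_{k=t}^{p-1} C(k p^{m-1}, ℓ) ≡ (-1)^t · p/(t+1) mod p² ℤ_p`. -/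
theorem stmt8 (p m : ℕ) [hp : Fact p.Prime] (hodd : Odd p) (hm : 2 ≤ m)
    (t : ℕ) (ht1 : 1 ≤ t) (ht2 : t ≤ p - 2) :
    ‖(∑ k ∈ Finset.Icc t (p - 1),
        ((k * p ^ (m - 1)).choose (t * p ^ (m - 1)) : ℚ_[p])) -
        (-1) ^ t * p / ((t : ℚ_[p]) + 1)‖ ≤ (p : ℝ) ^ (-2 : ℤ) := by
  have hp' := hp.out
  have hp2 : 2 ≤ p := hp'.two_le
  have hp3 : 3 ≤ p := by
    rcases hodd with ⟨r, hr⟩; omega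
  have htp : t + 1 ≤ p - 1 := by omega
  set N := m - 1 with hN
  set S : ℕ := ∑ k ∈ Finset.Icc t (p - 1), (k * p ^ N).choose (t * p ^ N) with hS
  set c : ℕ := p.choose (t + 1) with hc
  -- Step 1: S ≡ c mod p²
  have h1 : (S : ZMod (p ^ 2)) = (c : ZMod (p ^ 2)) := by
    have e1 : (S : ZMod (p ^ 2)) = ∑ k ∈ Finset.Icc t (p - 1), ((k.choose t : ZMod (p ^ 2))) := by
      rw [hS, Nat.cast_sum]
      refine Finset.sum_congr rfl fun k hk => ?_
      have hk1 : 1 ≤ k := le_trans ht1 (Finset.mem_Icc.mp hk).1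
      exact ljunggren_pow p hp' k t hk1 N
    rw [e1, ← Nat.cast_sum, Nat.sum_Icc_choose, hc, show p - 1 + 1 = p from by omega]
  -- Step 2
  have h2 : (p : ℤ) ^ 2 ∣ (S : ℤ) - (c : ℤ) := by
    have hz : (((S : ℤ) - (c : ℤ) : ℤ) : ZMod (p ^ 2)) = 0 := by
      push_cast
      rw [h1, sub_self]
    have := (ZMod.intCast_zmod_eq_zero_iff_dvd ((S : ℤ) - c) (p ^ 2)).mp hz
    exact_mod_cast this
  -- Step 3
  have hA : ‖(S : ℚ_[p]) - (c : ℚ_[p])‖ ≤ (p : ℝ) ^ (-2 : ℤ) := by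
    have e : ((S : ℚ_[p]) - c) = (((S : ℤ) - (c : ℤ) : ℤ) : ℚ_[p]) := by push_cast; ring
    rw [e]
    have := (Padic.norm_int_le_pow_iff_dvd ((S : ℤ) - (c : ℤ)) 2).mpr (by exact_mod_cast h2)
    simpa using this
  -- Step 4
  have ht0 : ((t : ℚ_[p]) + 1) ≠ 0 := by
    have h : ((t + 1 : ℕ) : ℚ_[p]) ≠ 0 := Nat.cast_ne_zero.mpr (Nat.succ_ne_zero t)
    push_cast at h
    exact h
  have hid : p * (p - 1).choose t = c * (t + 1) := by
    have h := Nat.add_one_mul_choose_eq (p - 1) t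
    rwa [show p - 1 + 1 = p from by omega] at h
  have hfac : (c : ℚ_[p]) - (-1) ^ t * p / ((t : ℚ_[p]) + 1)
      = ((p : ℚ_[p]) / ((t : ℚ_[p]) + 1)) * (((p - 1).choose t : ℚ_[p]) - (-1) ^ t) := by
    have hcast : (p : ℚ_[p]) * ((p - 1).choose t : ℚ_[p]) = (c : ℚ_[p]) * ((t : ℚ_[p]) + 1) := by
      have := congrArg (fun n : ℕ => (n : ℚ_[p])) hid
      push_cast at this
      exact this
    field_simp
    linear_combination -hcast
  have hnt : ‖((t : ℚ_[p]) + 1)‖ = 1 := by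
    have e : ((t : ℚ_[p]) + 1) = (((t + 1 : ℕ) : ℤ) : ℚ_[p]) := by push_cast; ring
    rw [e]
    refine le_antisymm (Padic.norm_int_le_one _) (not_lt.mp ?_)
    rw [Padic.norm_intCast_lt_one_iff]
    intro hdvd
    have hd : p ∣ t + 1 := by exact_mod_cast hdvd
    have := Nat.le_of_dvd (by omega) hd
    omega
  have hnz : ‖((p - 1).choose t : ℚ_[p]) - (-1) ^ t‖ ≤ (p : ℝ) ^ (-1 : ℤ) := by
    have hmod : (p : ℤ) ∣ (((p - 1).choose t : ℤ) - (-1) ^ t) := by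
      have hz : ((((p - 1).choose t : ℤ) - (-1) ^ t : ℤ) : ZMod p) = 0 := by
        push_cast
        rw [choose_pred p hp' t (by omega), sub_self]
      exact_mod_cast (ZMod.intCast_zmod_eq_zero_iff_dvd _ p).mp hz
    have e : ((p - 1).choose t : ℚ_[p]) - (-1) ^ t
        = ((((p - 1).choose t : ℤ) - (-1) ^ t : ℤ) : ℚ_[p]) := by push_cast; ring
    rw [e]
    have := (Padic.norm_int_le_pow_iff_dvd (((p - 1).choose t : ℤ) - (-1) ^ t) 1).mpr
      (by simpa using hmod)
    simpa using this
  have hB : ‖(c : ℚ_[p]) - (-1) ^ t * p / ((t : ℚ_[p]) + 1)‖ ≤ (p : ℝ) ^ (-2 : ℤ) := by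
    rw [hfac, norm_mul, norm_div, Padic.norm_p, hnt, div_one]
    have hppos : (0 : ℝ) < p := by positivity
    calc (p : ℝ)⁻¹ * ‖((p - 1).choose t : ℚ_[p]) - (-1) ^ t‖
        ≤ (p : ℝ)⁻¹ * (p : ℝ) ^ (-1 : ℤ) := by
          apply mul_le_mul_of_nonneg_left hnz (by positivity)
      _ = (p : ℝ) ^ (-2 : ℤ) := by
          rw [zpow_neg, zpow_neg, zpow_one, zpow_two, ← mul_inv]
  -- final
  have hsum : (∑ k ∈ Finset.Icc t (p - 1),
      ((k * p ^ N).choose (t * p ^ N) : ℚ_[p])) = (S : ℚ_[p]) := by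
    rw [hS, Nat.cast_sum]
  rw [hsum, show (S : ℚ_[p]) - (-1) ^ t * p / ((t : ℚ_[p]) + 1)
      = ((S : ℚ_[p]) - (c : ℚ_[p])) + ((c : ℚ_[p]) - (-1) ^ t * p / ((t : ℚ_[p]) + 1)) from by
        ring]
  exact le_trans (Padic.nonarchimedean _ _) (max_le hA hB)
end

section
/- Let p be a prime and m ≥ 2. If (p−2)p^{m-1} < ℓ < (p−2)p^{m-1} + p^{m-2}, then the p-adic valuation of C((p−1)p^{m-1}, ℓ) is at least 2. -/
open Nat Finset

/-- For a prime `p`, `m ≥ 2`, and `(p-2)p^{m-1} < ℓ < (p-2)p^{m-1} + p^{m-2}`,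
the `p`-adic valuation of `C((p-1)p^{m-1}, ℓ)` is at least 2. -/
theorem stmt9 (p m : ℕ) (hp : p.Prime) (hm : 2 ≤ m) (ℓ : ℕ)
    (h1 : (p - 2) * p ^ (m - 1) < ℓ) (h2 : ℓ < (p - 2) * p ^ (m - 1) + p ^ (m - 2)) :
    p ^ 2 ∣ ((p - 1) * p ^ (m - 1)).choose ℓ := by
  have hp2 : 2 ≤ p := hp.two_le
  -- rule out m = 2
  rcases eq_or_lt_of_le hm with hm2 | hm3
  · exfalso
    have : p ^ (m - 2) = 1 := by rw [← hm2]; simp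
    omega
  have hm3 : 3 ≤ m := hm3
  set n := (p - 1) * p ^ (m - 1) with hn
  set a := ℓ - (p - 2) * p ^ (m - 1) with ha
  have ha0 : 0 < a := by omega
  have ha1 : a < p ^ (m - 2) := by omega
  have hℓ : ℓ = (p - 2) * p ^ (m - 1) + a := by omega
  have hpm12 : p ^ (m - 1) = p * p ^ (m - 2) := by
    rw [← _root_.pow_succ']
    congr 1
    omega
  have hpm2pos : 0 < p ^ (m - 2) := pow_pos (by omega) _
  have hpm1pos : 0 < p ^ (m - 1) := pow_pos (by omega) _
  have ha2 : a < p ^ (m - 1) := by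
    calc a < p ^ (m - 2) := ha1
    _ ≤ p ^ (m - 1) := Nat.pow_le_pow_right (by omega) (by omega)
  have key : (p - 1) * p ^ (m - 1) = (p - 2) * p ^ (m - 1) + p ^ (m - 1) := by
    have h' : p - 1 = (p - 2) + 1 := by omega
    rw [h', add_mul, one_mul]
  have hkn : ℓ ≤ n := by rw [hn, key]; omega
  have hnl : n - ℓ = p ^ (m - 1) - a := by rw [hn, key]; omega
  have hnpos : 0 < n := by
    rw [hn]
    exact Nat.mul_pos (by omega) hpm1pos
  have hnb : Nat.log p n < m := by
    apply Nat.log_lt_of_lt_pow hnpos.ne'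
    calc n = (p - 1) * p ^ (m - 1) := rfl
    _ < p * p ^ (m - 1) := (Nat.mul_lt_mul_right hpm1pos).mpr (by omega)
    _ = p ^ m := by
        rw [← _root_.pow_succ']
        congr 1
        omega
  apply pow_dvd_of_le_emultiplicity
  rw [hp.emultiplicity_choose hkn hnb]
  have hsub : ({m - 2, m - 1} : Finset ℕ) ⊆
      {i ∈ Ico 1 m | p ^ i ≤ ℓ % p ^ i + (n - ℓ) % p ^ i} := by
    intro i hi
    simp only [mem_insert, mem_singleton] at hi
    rw [mem_filter, mem_Ico]
    rcases hi with rfl | rfl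
    · refine ⟨⟨by omega, by omega⟩, ?_⟩
      have e1 : ℓ % p ^ (m - 2) = a := by
        have h' : ℓ = a + (p - 2) * p * p ^ (m - 2) := by
          rw [hℓ, hpm12]; ring
        rw [h', Nat.add_mul_mod_self_right, Nat.mod_eq_of_lt ha1]
      have e2 : (n - ℓ) % p ^ (m - 2) = p ^ (m - 2) - a := by
        have h' : n - ℓ = (p ^ (m - 2) - a) + (p - 1) * p ^ (m - 2) := by
          have h'' : p ^ (m - 1) = (p - 1) * p ^ (m - 2) + p ^ (m - 2) := by
            have : p = (p - 1) + 1 := by omega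
            rw [hpm12]
            nth_rewrite 1 [this]
            rw [add_mul, one_mul]
          omega
        rw [h', Nat.add_mul_mod_self_right, Nat.mod_eq_of_lt (by omega)]
      omega
    · refine ⟨⟨by omega, by omega⟩, ?_⟩
      have e1 : ℓ % p ^ (m - 1) = a := by
        rw [hℓ, add_comm, Nat.add_mul_mod_self_right, Nat.mod_eq_of_lt ha2]
      have e2 : (n - ℓ) % p ^ (m - 1) = p ^ (m - 1) - a := by
        rw [hnl, Nat.mod_eq_of_lt (by omega)]
      omega
  have hcard : 2 ≤ #{i ∈ Ico 1 m | p ^ i ≤ ℓ % p ^ i + (n - ℓ) % p ^ i} := by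
    calc 2 = #({m - 2, m - 1} : Finset ℕ) := by
          rw [card_insert_of_notMem (by simp; omega), card_singleton]
    _ ≤ _ := card_le_card hsub
  exact_mod_cast hcard
end

section
/- Let p be an odd prime, m ≥ 2, and d−1 = (p−2)p^{m-1} + p^{m-2}. Then C((p−1)p^{m-1}, d−1) ≡ −p mod p^2 ℤ_p. -/
open Nat Finset

lemma aux_dvd_choose (p a c : ℕ) (hp : p.Prime) (hc : ¬ p ∣ c) :
    p ∣ (p * a).choose c := by
  have hc0 : c ≠ 0 := by rintro rfl; exact hc (dvd_zero p)
  rcases Nat.eq_zero_or_pos a with rfl | ha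
  · simp [Nat.choose_eq_zero_of_lt (Nat.pos_of_ne_zero hc0)]
  obtain ⟨d, rfl⟩ : ∃ d, c = d + 1 := ⟨c - 1, (Nat.succ_pred_eq_of_pos (Nat.pos_of_ne_zero hc0)).symm⟩
  obtain ⟨n, hn⟩ : ∃ n, p * a = n + 1 :=
    ⟨p * a - 1, (Nat.succ_pred_eq_of_pos (Nat.mul_pos hp.pos ha)).symm⟩
  have key : (p * a) * n.choose d = (p * a).choose (d + 1) * (d + 1) := by
    rw [hn]; exact Nat.add_one_mul_choose_eq n d
  have : p ∣ (p * a).choose (d + 1) * (d + 1) := key ▸ Dvd.dvd.mul_right (Dvd.intro a rfl) _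
  exact (hp.dvd_mul.mp this).resolve_right hc
lemma aux_choose_mul (p : ℕ) (hp : p.Prime) (a b : ℕ) :
    (((p * a).choose (p * b) : ℕ) : ZMod (p ^ 2)) = ((a.choose b : ℕ) : ZMod (p ^ 2)) := by
  induction a generalizing b with
  | zero =>
    rcases Nat.eq_zero_or_pos b with rfl | hb
    · simp
    · rw [Nat.mul_zero, Nat.choose_eq_zero_of_lt (Nat.mul_pos hp.pos hb),
        Nat.choose_eq_zero_of_lt hb]
  | succ a ih =>
    rcases Nat.eq_zero_or_pos b with rfl | hb
    · simp
    obtain ⟨b, rfl⟩ : ∃ b', b = b' + 1 := ⟨b - 1, (Nat.succ_pred_eq_of_pos hb).symm⟩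
    have hpN : p ≤ p * (b + 1) := Nat.le_mul_of_pos_right p (Nat.succ_pos b)
    have hsub : p * (b + 1) - p = p * b := by rw [Nat.mul_succ]; omega
    have hvdm : (p * (a + 1)).choose (p * (b + 1))
        = ∑ ij ∈ antidiagonal (p * (b + 1)), (p * a).choose ij.1 * p.choose ij.2 := by
      rw [Nat.mul_succ]; exact Nat.add_choose_eq _ _ _
    have hpair : (((p * (b + 1), 0) : ℕ × ℕ)) ≠ (p * (b + 1) - p, p) := by
      have := hp.pos
      intro h
      rw [Prod.mk.injEq] at h
      omega
    have hsubset : ({(p * (b + 1), 0), (p * (b + 1) - p, p)} : Finset (ℕ × ℕ))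
        ⊆ antidiagonal (p * (b + 1)) := by
      intro ij hij
      simp only [Finset.mem_insert, Finset.mem_singleton] at hij
      rcases hij with rfl | rfl <;> simp [Finset.mem_antidiagonal] <;> omega
    have hzero : ∀ ij ∈ antidiagonal (p * (b + 1)),
        ij ∉ ({(p * (b + 1), 0), (p * (b + 1) - p, p)} : Finset (ℕ × ℕ)) →
        (((p * a).choose ij.1 * p.choose ij.2 : ℕ) : ZMod (p ^ 2)) = 0 := by
      rintro ⟨i, j⟩ hij hns
      rw [Finset.HasAntidiagonal.mem_antidiagonal] at hij
      simp only [Finset.mem_insert, Finset.mem_singleton, Prod.mk.injEq, not_or, not_and] at hns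
      rcases lt_trichotomy j p with hj | rfl | hj
      · rcases Nat.eq_zero_or_pos j with rfl | hj0
        · exact absurd rfl (hns.1 (by omega))
        have h1 : p ∣ (p * a).choose i := by
          refine aux_dvd_choose p a i hp ?_
          intro hdvd
          have hN : p ∣ i + j := hij ▸ Dvd.intro (b + 1) rfl
          have : p ∣ j := by
            have := Nat.dvd_sub hN hdvd
            rwa [Nat.add_sub_cancel_left] at this
          exact absurd (Nat.le_of_dvd hj0 this) (not_le.mpr hj)
        have h2 : p ∣ p.choose j := hp.dvd_choose_self hj0.ne' hj
        rw [ZMod.natCast_eq_zero_iff, pow_two]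
        exact mul_dvd_mul h1 h2
      · exact absurd rfl (hns.2 (by omega))
      · rw [Nat.choose_eq_zero_of_lt hj, Nat.mul_zero, Nat.cast_zero]
    calc (((p * (a + 1)).choose (p * (b + 1)) : ℕ) : ZMod (p ^ 2))
        = ∑ ij ∈ antidiagonal (p * (b + 1)),
            (((p * a).choose ij.1 * p.choose ij.2 : ℕ) : ZMod (p ^ 2)) := by
          rw [hvdm, Nat.cast_sum]
      _ = ∑ ij ∈ ({(p * (b + 1), 0), (p * (b + 1) - p, p)} : Finset (ℕ × ℕ)),
            (((p * a).choose ij.1 * p.choose ij.2 : ℕ) : ZMod (p ^ 2)) :=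
          (Finset.sum_subset hsubset (fun ij h1 h2 => hzero ij h1 h2)).symm
      _ = (((p * a).choose (p * (b + 1)) * p.choose 0 : ℕ) : ZMod (p ^ 2))
          + (((p * a).choose (p * (b + 1) - p) * p.choose p : ℕ) : ZMod (p ^ 2)) := by
          rw [Finset.sum_pair hpair]
      _ = ((a.choose (b + 1) : ℕ) : ZMod (p ^ 2)) + ((a.choose b : ℕ) : ZMod (p ^ 2)) := by
          rw [Nat.choose_zero_right, Nat.choose_self, Nat.mul_one, Nat.mul_one, hsub,
            ih (b + 1), ih b]
      _ = (((a + 1).choose (b + 1) : ℕ) : ZMod (p ^ 2)) := by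
          rw [Nat.choose_succ_succ']; push_cast; ring

lemma aux_base (p : ℕ) [hpf : Fact p.Prime] :
    (p : ℤ) ^ 2 ∣ ((p * (p - 1)).choose (p * (p - 2) + 1) : ℤ) + p := by
  have hp := hpf.out
  have hp2 : 2 ≤ p := hp.two_le
  set a := p - 1 with ha
  set b := p - 2 with hb
  have hab : a = b + 1 := by omega
  have ha1 : 1 ≤ a := by omega
  obtain ⟨n, hn⟩ : ∃ n, p * a = n + 1 :=
    ⟨p * a - 1, (Nat.succ_pred_eq_of_pos (Nat.mul_pos hp.pos ha1)).symm⟩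
  have key : (p * a) * n.choose (p * b) = (p * a).choose (p * b + 1) * (p * b + 1) := by
    rw [hn]; exact Nat.add_one_mul_choose_eq n (p * b)
  -- Lucas: n.choose (p*b) ≡ 1 mod p
  have hn' : n = p * (a - 1) + (p - 1) := by
    have hma : p * a = p * (a - 1) + p := by
      conv_lhs => rw [← Nat.succ_pred_eq_of_pos ha1]
      rw [Nat.mul_succ, Nat.pred_eq_sub_one]
    omega
  have hnp : n % p = p - 1 ∧ n / p = a - 1 := by
    constructor
    · rw [hn', Nat.mul_add_mod, Nat.mod_eq_of_lt (by omega)]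
    · rw [hn', Nat.mul_add_div hp.pos, Nat.div_eq_of_lt (by omega), Nat.add_zero]
  have lucas : (n.choose (p * b)) ≡ (n % p).choose ((p * b) % p) * (n / p).choose ((p * b) / p) [MOD p] :=
    Choose.choose_modEq_choose_mod_mul_choose_div_nat
  have hmod : n.choose (p * b) ≡ 1 [MOD p] := by
    have h1 : (p * b) % p = 0 := Nat.mul_mod_right p b
    have h2 : (p * b) / p = b := Nat.mul_div_cancel_left b hp.pos
    rw [h1, h2, hnp.1, hnp.2] at lucas
    have : a - 1 = b := by omega
    rw [this, Nat.choose_zero_right, one_mul, Nat.choose_self] at lucas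
    exact lucas
  obtain ⟨s, hs⟩ : ∃ s : ℤ, (n.choose (p * b) : ℤ) = 1 + p * s := by
    have := (Int.natCast_modEq_iff.mpr hmod : (n.choose (p*b) : ℤ) ≡ 1 [ZMOD p])
    obtain ⟨s, hs⟩ := Int.ModEq.dvd this.symm
    exact ⟨s, by push_cast at hs; linarith⟩
  obtain ⟨y, hy⟩ : ∃ y : ℕ, (p * a).choose (p * b + 1) = p * y := by
    refine aux_dvd_choose p a (p * b + 1) hp ?_
    intro h
    have := Nat.dvd_sub h (Dvd.intro b rfl)
    simp at this
    omega
  have keyZ : (p : ℤ) * a * (1 + p * s) = (p * y) * (p * b + 1) := by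
    have h := congrArg (fun x : ℕ => (x : ℤ)) key
    push_cast [hy] at h
    rw [hs] at h
    linarith
  have hp0 : (p : ℤ) ≠ 0 := by exact_mod_cast hp.pos.ne'
  have E : (a : ℤ) * (1 + p * s) = y * (p * b + 1) := by
    apply mul_left_cancel₀ hp0
    linear_combination keyZ
  have haZ : (a : ℤ) = p - 1 := by
    have : (a : ℤ) = ((p : ℤ) - 1) := by rw [ha]; push_cast [Nat.cast_sub (by omega : 1 ≤ p)]; ring
    exact this
  have E' : ((p : ℤ) - 1) * (1 + p * s) = y * (p * b + 1) := by rw [← haZ]; exact E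
  rw [hy]
  refine ⟨1 + ((p : ℤ) - 1) * s - b * y, ?_⟩
  push_cast
  linear_combination -(p : ℤ) * E'

lemma aux_main (p : ℕ) [hpf : Fact p.Prime] (t : ℕ) :
    (p : ℤ) ^ 2 ∣ (((p - 1) * p ^ (t + 1)).choose ((p - 2) * p ^ (t + 1) + p ^ t) : ℤ) + p := by
  have hp := hpf.out
  induction t with
  | zero =>
    have h1 : (p - 1) * p ^ (0 + 1) = p * (p - 1) := by ring
    have h2 : (p - 2) * p ^ (0 + 1) + p ^ 0 = p * (p - 2) + 1 := by ring
    rw [h1, h2]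
    exact aux_base p
  | succ t ih =>
    have h1 : (p - 1) * p ^ (t + 1 + 1) = p * ((p - 1) * p ^ (t + 1)) := by ring
    have h2 : (p - 2) * p ^ (t + 1 + 1) + p ^ (t + 1)
        = p * ((p - 2) * p ^ (t + 1) + p ^ t) := by ring
    rw [h1, h2]
    have hcong := aux_choose_mul p hp ((p - 1) * p ^ (t + 1)) ((p - 2) * p ^ (t + 1) + p ^ t)
    have hdvd : (p : ℤ) ^ 2 ∣
        ((p * ((p - 1) * p ^ (t + 1))).choose (p * ((p - 2) * p ^ (t + 1) + p ^ t)) : ℤ)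
          - (((p - 1) * p ^ (t + 1)).choose ((p - 2) * p ^ (t + 1) + p ^ t) : ℤ) := by
      have := (ZMod.intCast_zmod_eq_zero_iff_dvd
        (((p * ((p - 1) * p ^ (t + 1))).choose (p * ((p - 2) * p ^ (t + 1) + p ^ t)) : ℤ)
          - (((p - 1) * p ^ (t + 1)).choose ((p - 2) * p ^ (t + 1) + p ^ t) : ℤ)) (p ^ 2)).mp
      push_cast at this ⊢
      refine this ?_
      rw [hcong]
      ring
    have := dvd_add hdvd ih
    convert this using 1
    · rfl
    · ring

/-- For an odd prime `p`, `m ≥ 2`, and `d - 1 = (p-2)p^{m-1} + p^{m-2}`: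
`C((p-1)p^{m-1}, d-1) ≡ -p mod p² ℤ_p`. -/
theorem stmt10 (p m : ℕ) [hp : Fact p.Prime] (hodd : Odd p) (hm : 2 ≤ m) :
    ‖(((p - 1) * p ^ (m - 1)).choose ((p - 2) * p ^ (m - 1) + p ^ (m - 2)) : ℚ_[p])
        + p‖ ≤ (p : ℝ) ^ (-2 : ℤ) := by
  obtain ⟨t, rfl⟩ : ∃ t, m = t + 2 := ⟨m - 2, by omega⟩
  have hm1 : t + 2 - 1 = t + 1 := by omega
  have hm2 : t + 2 - 2 = t := by omega
  rw [hm1, hm2]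
  have hdvd := aux_main p t
  have hcast : (((p - 1) * p ^ (t + 1)).choose ((p - 2) * p ^ (t + 1) + p ^ t) : ℚ_[p]) + p
      = (((((p - 1) * p ^ (t + 1)).choose ((p - 2) * p ^ (t + 1) + p ^ t) : ℤ) + p : ℤ) : ℚ_[p]) := by
    push_cast
    ring
  rw [hcast]
  have := (Padic.norm_int_le_pow_iff_dvd
    ((((p - 1) * p ^ (t + 1)).choose ((p - 2) * p ^ (t + 1) + p ^ t) : ℤ) + p) 2).mpr
    (by exact_mod_cast hdvd)
  convert this using 2
  all_goals norm_num
end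

section
/- Let p be an odd prime and m ≥ 2. The product Π_{j=1}^{d−2} ((p−1)p^{m-1}/j − 1), where d−1 = (p−2)p^{m-1} + p^{m-2}, satisfies Π_{j=1}^{d−2} ((p−1)p^{m-1}/j − 1) ≡ 1 mod p ℤ_p. -/
/-- Single-digit step of Lucas' theorem. -/
lemma lucas_step (p : ℕ) [Fact p.Prime] (a b r s : ℕ) (hr : r < p) (hs : s < p) :
    ((a * p + r).choose (b * p + s)) ≡ (a.choose b) * (r.choose s) [MOD p] := by
  have hp : 0 < p := (Fact.out : p.Prime).pos
  have h := Choose.choose_modEq_choose_mod_mul_choose_div_nat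
    (p := p) (n := a * p + r) (k := b * p + s)
  have h1 : (a * p + r) % p = r := by
    rw [mul_comm, Nat.mul_add_mod, Nat.mod_eq_of_lt hr]
  have h2 : (a * p + r) / p = a := by
    rw [mul_comm, Nat.mul_add_div hp, Nat.div_eq_of_lt hr, add_zero]
  have h3 : (b * p + s) % p = s := by
    rw [mul_comm, Nat.mul_add_mod, Nat.mod_eq_of_lt hs]
  have h4 : (b * p + s) / p = b := by
    rw [mul_comm, Nat.mul_add_div hp, Nat.div_eq_of_lt hs, add_zero]
  rw [h1, h2, h3, h4] at h
  rw [show a.choose b * r.choose s = r.choose s * a.choose b from Nat.mul_comm _ _]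
  exact h

/-- The key Lucas computation: `C((p-1)p^k - 1, (p-2)p^k + p^(k-1) - 1) ≡ 1 mod p`. -/
lemma lucasA (p : ℕ) [Fact p.Prime] (hp3 : 3 ≤ p) :
    ∀ k, 1 ≤ k →
      ((p - 1) * p ^ k - 1).choose ((p - 2) * p ^ k + p ^ (k - 1) - 1) ≡ 1 [MOD p] := by
  intro k
  induction k with
  | zero => omega
  | succ k ih =>
    intro _
    rcases Nat.eq_or_lt_of_le (Nat.one_le_iff_ne_zero.mpr (Nat.succ_ne_zero k)) with h1 | h1
    · -- base case k + 1 = 1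
      have hk : k = 0 := by omega
      subst hk
      have e1 : (p - 1) * p ^ 1 - 1 = (p - 2) * p + (p - 1) := by
        have : 1 ≤ (p - 1) * p ^ 1 := by
          have : 1 * 1 ≤ (p - 1) * p ^ 1 := Nat.mul_le_mul (by omega) (by simpa using by omega)
          simpa using this
        zify [this, show 2 ≤ p by omega, show 1 ≤ p by omega]
        push_cast
        ring
      have e2 : (p - 2) * p ^ 1 + p ^ 0 - 1 = (p - 2) * p + 0 := by simp
      rw [e1, e2]
      have := lucas_step p (p - 2) (p - 2) (p - 1) 0 (by omega) (by omega)
      simpa [Nat.choose_self] using this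
    · -- inductive step: k ≥ 1
      have hk1 : 1 ≤ k := by omega
      have ihk := ih hk1
      have hpk : 1 ≤ p ^ k := Nat.one_le_pow _ _ (by omega)
      have hpk1 : 1 ≤ p ^ (k - 1) := Nat.one_le_pow _ _ (by omega)
      have hps : p ^ (k + 1) = p ^ k * p := pow_succ p k
      have hps2 : p ^ k = p ^ (k - 1) * p := by
        conv_lhs => rw [show k = (k - 1) + 1 by omega]
        exact pow_succ p (k - 1)
      have e1 : (p - 1) * p ^ (k + 1) - 1 = ((p - 1) * p ^ k - 1) * p + (p - 1) := by
        have h1 : 1 ≤ (p - 1) * p ^ k := Nat.one_le_iff_ne_zero.mpr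
          (Nat.mul_ne_zero (by omega) (by omega))
        have h2 : 1 ≤ (p - 1) * p ^ (k + 1) := Nat.one_le_iff_ne_zero.mpr
          (Nat.mul_ne_zero (by omega) (by positivity))
        have hz1 : (p : ℤ) ^ (k + 1) = (p : ℤ) ^ k * p := by exact_mod_cast hps
        zify [h1, h2, show 1 ≤ p by omega]
        push_cast [show 1 ≤ p by omega]
        linear_combination ((p : ℤ) - 1) * hz1
      have e2 : (p - 2) * p ^ (k + 1) + p ^ k - 1
          = ((p - 2) * p ^ k + p ^ (k - 1) - 1) * p + (p - 1) := by
        have h1 : 1 ≤ (p - 2) * p ^ k + p ^ (k - 1) := by omega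
        have hz1 : (p : ℤ) ^ (k + 1) = (p : ℤ) ^ k * p := by exact_mod_cast hps
        have hz2 : (p : ℤ) ^ k = (p : ℤ) ^ (k - 1) * p := by exact_mod_cast hps2
        zify [show 1 ≤ (p - 2) * p ^ (k + 1) + p ^ k by omega, h1, show 1 ≤ p by omega]
        push_cast [show 2 ≤ p by omega]
        linear_combination ((p : ℤ) - 2) * hz1 + hz2
      simp only [Nat.add_sub_cancel]
      rw [e1, e2]
      have := lucas_step p ((p - 1) * p ^ k - 1) ((p - 2) * p ^ k + p ^ (k - 1) - 1)
        (p - 1) (p - 1) (by omega) (by omega)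
      refine this.trans ?_
      rw [Nat.choose_self, mul_one]
      exact ihk

/-- The product identity: `∏_{j=1}^{N} (X/j - 1) = C(X-1, N)` in a char-zero field. -/
lemma prod_eq_choose {K : Type*} [Field K] [CharZero K] (X : ℕ) :
    ∀ N : ℕ, N < X →
      (∏ j ∈ Finset.Icc 1 N, ((X : K) / j - 1)) = ((X - 1).choose N : K) := by
  intro N
  induction N with
  | zero => simp
  | succ N ih =>
    intro hN
    have hN' : N < X := by omega
    rw [Finset.prod_Icc_succ_top (by omega), ih hN']
    have key : (X - 1).choose (N + 1) * (N + 1) = (X - 1).choose N * (X - 1 - N) :=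
      Nat.choose_succ_right_eq (X - 1) N
    have key2 : ((X - 1).choose (N + 1) : K) * ((N : K) + 1)
        = ((X - 1).choose N : K) * ((X : K) - 1 - N) := by
      have := congrArg (Nat.cast : ℕ → K) key
      push_cast [show N ≤ X - 1 by omega, show 1 ≤ X by omega] at this
      exact this
    have hNc : ((N : K) + 1) ≠ 0 := Nat.cast_add_one_ne_zero N
    field_simp
    push_cast
    linear_combination (-1 : K) * key2

/-- For an odd prime `p` and `m ≥ 2`, with `d - 1 = (p-2)p^{m-1} + p^{m-2}`,
the product `Π_{j=1}^{d-2} ((p-1)p^{m-1}/j - 1)` is `≡ 1 mod p ℤ_p`. -/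
theorem stmt11 (p m : ℕ) [hp : Fact p.Prime] (hodd : Odd p) (hm : 2 ≤ m) :
    ‖(∏ j ∈ Finset.Icc 1 ((p - 2) * p ^ (m - 1) + p ^ (m - 2) - 1),
        (((p : ℚ_[p]) - 1) * (p : ℚ_[p]) ^ (m - 1) / j - 1)) - 1‖ ≤ (p : ℝ)⁻¹ := by
  have hp2 : 2 ≤ p := (Fact.out : p.Prime).two_le
  have hp3 : 3 ≤ p := by
    rcases Nat.lt_or_ge p 3 with h | h
    · interval_cases p
      exact absurd hodd (by decide)
    · exact h
  set X : ℕ := (p - 1) * p ^ (m - 1) with hX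
  set N : ℕ := (p - 2) * p ^ (m - 1) + p ^ (m - 2) - 1 with hNdef
  have hpm1 : p ^ (m - 2) < p ^ (m - 1) := Nat.pow_lt_pow_right (by omega) (by omega)
  have hNX : N < X := by
    have : (p - 2) * p ^ (m - 1) + p ^ (m - 1) = (p - 1) * p ^ (m - 1) := by
      rw [← Nat.succ_mul]
      congr 1
      omega
    omega
  have hprod : (∏ j ∈ Finset.Icc 1 N,
      (((p : ℚ_[p]) - 1) * (p : ℚ_[p]) ^ (m - 1) / j - 1))
      = ((X - 1).choose N : ℚ_[p]) := by
    rw [← prod_eq_choose X N hNX]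
    apply Finset.prod_congr rfl
    intro j _
    rw [hX]
    push_cast [show 1 ≤ p by omega]
    ring
  rw [hprod]
  -- now use Lucas
  have hL : (X - 1).choose N ≡ 1 [MOD p] := by
    have := lucasA p hp3 (m - 1) (by omega)
    rw [show (m - 1) - 1 = m - 2 by omega] at this
    exact this
  have hdvd : (p : ℤ) ∣ ((X - 1).choose N : ℤ) - 1 := by
    have := (Nat.modEq_iff_dvd (n := p) (a := 1) (b := (X - 1).choose N)).mp hL.symm
    simpa using this
  have : ((X - 1).choose N : ℚ_[p]) - 1 = ((((X - 1).choose N : ℤ) - 1 : ℤ) : ℚ_[p]) := by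
    push_cast
    ring
  rw [this]
  have := (Padic.norm_int_le_pow_iff_dvd (p := p)
    (((X - 1).choose N : ℤ) - 1) 1).mpr (by simpa using hdvd)
  simpa using this
end

section
/- Let p be a prime, n ≥ 1, ζ_p a primitive p-th root of unity, and p^{1/p^i} compatible p^i-th roots of p. Then the p-adic valuation of (1 − ζ_p) / (p^{1/p} · p^{1/p^2} ⋯ p^{1/p^n}) equals 1/(p^n (p−1)); in particular this element is a uniformizer of ℚ_p(ζ_p, p^{1/p^n}). -/
/-- For a prime `p`, `n ≥ 1`, a primitive `p`-th root of unity `ζ_p`, and compatible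
`p^i`-th roots `p^{1/p^i}` of `p`, the `p`-adic valuation (normalized by `ord_p p = 1`)
of `(1 - ζ_p)/(p^{1/p} ⋯ p^{1/p^n})` equals `1/(p^n (p-1))`; in particular this element
is a uniformizer of `ℚ_p(ζ_p, p^{1/p^n})`. -/
theorem stmt13 (p : ℕ) [hp : Fact p.Prime] (n : ℕ) (hn : 1 ≤ n)
    (K : Type*) [Field K] [Algebra ℚ_[p] K] [IsAlgClosure ℚ_[p] K]
    (v : K → ℚ)
    (hv_mul : ∀ x y : K, x ≠ 0 → y ≠ 0 → v (x * y) = v x + v y)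
    (hv_add : ∀ x y : K, x ≠ 0 → y ≠ 0 → x + y ≠ 0 → min (v x) (v y) ≤ v (x + y))
    (hv_base : ∀ x : ℚ_[p], x ≠ 0 → v (algebraMap ℚ_[p] K x) = x.valuation)
    (ζ : K) (hζ : IsPrimitiveRoot ζ p)
    (ρ : ℕ → K) (hρ0 : ρ 0 = (p : K)) (hρ : ∀ i, ρ (i + 1) ^ p = ρ i) :
    v ((1 - ζ) / ∏ i ∈ Finset.Icc 1 n, ρ i) = 1 / ((p : ℚ) ^ n * ((p : ℚ) - 1)) := by
  have hp1 : 1 < p := hp.out.one_lt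
  have hp0 : 0 < p := hp.out.pos
  have hpQ : (1 : ℚ) < (p : ℚ) := by exact_mod_cast hp1
  have hpQ0 : (p : ℚ) ≠ 0 := by positivity
  -- basic valuation facts
  have hv1 : v 1 = 0 := by
    have h := hv_mul 1 1 one_ne_zero one_ne_zero
    rw [mul_one] at h; linarith
  have hvpow : ∀ (x : K), x ≠ 0 → ∀ k : ℕ, v (x ^ k) = k * v x := by
    intro x hx k
    induction k with
    | zero => simpa using hv1
    | succ k ih =>
      rw [pow_succ, hv_mul _ _ (pow_ne_zero _ hx) hx, ih]
      push_cast; ring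
  have hvprod : ∀ (s : Finset ℕ) (f : ℕ → K), (∀ i ∈ s, f i ≠ 0) →
      v (∏ i ∈ s, f i) = ∑ i ∈ s, v (f i) := by
    intro s
    induction s using Finset.induction with
    | empty => intro f _; simpa using hv1
    | insert _ _ hns ih =>
      intro f hf
      rename_i a s'
      rw [Finset.prod_insert hns, Finset.sum_insert hns,
        hv_mul _ _ (hf a (Finset.mem_insert_self a s'))
          (Finset.prod_ne_zero_iff.mpr fun i hi => hf i (Finset.mem_insert_of_mem hi)),
        ih f fun i hi => hf i (Finset.mem_insert_of_mem hi)]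
  -- v p = 1
  have hpK0 : (p : K) ≠ 0 := by
    rw [show ((p : ℕ) : K) = algebraMap ℚ_[p] K (p : ℚ_[p]) by push_cast; rfl]
    exact (map_ne_zero _).mpr (by exact_mod_cast hp.out.ne_zero)
  have hvp : v (p : K) = 1 := by
    rw [show ((p : ℕ) : K) = algebraMap ℚ_[p] K (p : ℚ_[p]) by push_cast; rfl,
      hv_base _ (by exact_mod_cast hp.out.ne_zero), Padic.valuation_p]
    norm_num
  -- v (ρ i)
  have hρpow : ∀ i, ρ i ^ p ^ i = (p : K) := by
    intro i
    induction i with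
    | zero => simpa using hρ0
    | succ i ih => rw [pow_succ, pow_mul', ← ih, ← hρ i]
  have hρ0' : ∀ i, ρ i ≠ 0 := by
    intro i h
    apply hpK0
    rw [← hρpow i, h, zero_pow (pow_ne_zero _ hp.out.ne_zero)]
  have hvρ : ∀ i, v (ρ i) = 1 / (p : ℚ) ^ i := by
    intro i
    have h := hvpow (ρ i) (hρ0' i) (p ^ i)
    rw [hρpow i, hvp] at h
    have hpi : ((p : ℚ)) ^ i ≠ 0 := pow_ne_zero _ hpQ0
    field_simp
    rw [h]; push_cast; ring
  have hζ0 : ζ ≠ 0 := hζ.ne_zero hp0.ne'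
  have hζ1 : ζ ≠ 1 := hζ.ne_one hp1
  -- key lemma: for any primitive p-th root ξ, v (1 - ξ) ≤ v (1 - ξ^j) for 0 < j < p
  have key : ∀ ξ : K, IsPrimitiveRoot ξ p → ∀ j : ℕ, 0 < j → j < p →
      v (1 - ξ) ≤ v (1 - ξ ^ j) := by
    intro ξ hξ j hj0 hjp
    have hξ0 : ξ ≠ 0 := hξ.ne_zero hp0.ne'
    have hvξ : v ξ = 0 := by
      have h := hvpow ξ hξ0 p
      rw [hξ.pow_eq_one, hv1] at h
      have := mul_eq_zero.mp h.symm
      tauto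
    have hvξk : ∀ k : ℕ, v (ξ ^ k) = 0 := fun k => by
      rw [hvpow ξ hξ0 k, hvξ, mul_zero]
    have hne1 : ξ ≠ 1 := hξ.ne_one hp1
    have hune : ∀ k : ℕ, 0 < k → k < p → (∑ i ∈ Finset.range k, ξ ^ i) ≠ 0 := by
      intro k hk0 hkp
      rw [geom_sum_eq hne1]
      exact div_ne_zero (sub_ne_zero.mpr (hξ.pow_ne_one_of_pos_of_lt hk0.ne' hkp))
        (sub_ne_zero.mpr hne1)
    have huval : ∀ k : ℕ, 0 < k → k < p → 0 ≤ v (∑ i ∈ Finset.range k, ξ ^ i) := by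
      intro k
      induction k with
      | zero => intro h; exact absurd h (lt_irrefl 0)
      | succ k ih =>
        intro _ hkp
        rcases Nat.eq_zero_or_pos k with hk | hk
        · subst hk
          simpa [hv1] using le_refl (0 : ℚ)
        · have h1 := ih hk (lt_trans (Nat.lt_succ_self k) hkp)
          have h2 := hune k hk (lt_trans (Nat.lt_succ_self k) hkp)
          have h3 := hune (k + 1) k.succ_pos hkp
          rw [Finset.sum_range_succ] at h3 ⊢
          have h4 := hv_add _ _ h2 (pow_ne_zero _ hξ0) h3
          rw [hvξk k] at h4
          exact le_trans (le_min h1 (le_refl 0)) h4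
    have hfac : 1 - ξ ^ j = (1 - ξ) * ∑ i ∈ Finset.range j, ξ ^ i := by
      have h := geom_sum_mul ξ j
      linear_combination h
    rw [hfac, hv_mul _ _ (sub_ne_zero.mpr (Ne.symm hne1)) (hune j hj0 hjp)]
    linarith [huval j hj0 hjp]
  -- v(1 - ζ^j) = v(1 - ζ) for 0 < j < p
  have hsame : ∀ j : ℕ, 0 < j → j < p → v (1 - ζ ^ j) = v (1 - ζ) := by
    intro j hj0 hjp
    have hcop : j.Coprime p :=
      (hp.out.coprime_iff_not_dvd.mpr fun h =>
        absurd (Nat.le_of_dvd hj0 h) (not_le.mpr hjp)).symm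
    have hξ : IsPrimitiveRoot (ζ ^ j) p := hζ.pow_of_coprime j hcop
    have hjZ : (j : ZMod p) ≠ 0 := by
      rw [Ne, ZMod.natCast_eq_zero_iff]
      exact fun h => absurd (Nat.le_of_dvd hj0 h) (not_le.mpr hjp)
    set m : ℕ := ((j : ZMod p)⁻¹).val with hm
    have hmlt : m < p := ZMod.val_lt _
    have hm0 : 0 < m := by
      rcases Nat.eq_zero_or_pos m with h | h
      · exfalso
        have : (j : ZMod p)⁻¹ = 0 := (ZMod.val_eq_zero _).mp h
        exact hjZ (by simpa [this] using (inv_eq_zero.mp this))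
      · exact h
    have hmod : (j * m) % p = 1 % p := by
      have : ((j * m : ℕ) : ZMod p) = ((1 : ℕ) : ZMod p) := by
        push_cast
        rw [hm, ZMod.natCast_val, ZMod.cast_id]
        exact mul_inv_cancel₀ hjZ
      exact (ZMod.natCast_eq_natCast_iff _ _ _).mp this
    have hpowζ : (ζ ^ j) ^ m = ζ := by
      rw [← pow_mul]
      have h1p : 1 % p = 1 := Nat.mod_eq_of_lt hp1
      obtain ⟨t, ht⟩ : ∃ t, j * m = p * t + 1 := by
        have hd := Nat.div_add_mod (j * m) p
        rw [hmod, h1p] at hd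
        exact ⟨j * m / p, hd.symm⟩
      rw [ht, pow_add, pow_mul, hζ.pow_eq_one, one_pow, one_mul, pow_one]
    have h1 := key ζ hζ j hj0 hjp
    have h2 := key (ζ ^ j) hξ m hm0 hmlt
    rw [hpowζ] at h2
    linarith
  -- v(1 - ζ) = 1/(p-1)
  have hζne : ∀ k : ℕ, 0 < k → k < p → (1 - ζ ^ k) ≠ 0 := by
    intro k hk0 hkp h
    exact hζ.pow_ne_one_of_pos_of_lt hk0.ne' hkp (by linear_combination -h)
  have hvζ1 : v (1 - ζ) = 1 / ((p : ℚ) - 1) := by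
    have hpp : p - 1 + 1 = p := by omega
    have hζ' : IsPrimitiveRoot ζ ((p - 1) + 1) := by rwa [hpp]
    have hprod : ∏ k ∈ Finset.range (p - 1), (1 - ζ ^ (k + 1)) = (p : K) := by
      rw [hζ'.prod_one_sub_pow_eq_order]
      rw [Nat.cast_sub hp0]
      ring
    have hne : ∀ k ∈ Finset.range (p - 1), (1 - ζ ^ (k + 1)) ≠ 0 := by
      intro k hk
      exact hζne (k + 1) k.succ_pos (by have := Finset.mem_range.mp hk; omega)
    have hsum : ∑ k ∈ Finset.range (p - 1), v (1 - ζ ^ (k + 1)) = 1 := by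
      rw [← hvprod _ _ hne, hprod, hvp]
    have hsum2 : ∑ k ∈ Finset.range (p - 1), v (1 - ζ ^ (k + 1)) =
        (p - 1 : ℕ) * v (1 - ζ) := by
      rw [Finset.sum_congr rfl fun k hk =>
        hsame (k + 1) k.succ_pos (by have := Finset.mem_range.mp hk; omega)]
      rw [Finset.sum_const, Finset.card_range, nsmul_eq_mul]
    rw [hsum2] at hsum
    have hc : ((p - 1 : ℕ) : ℚ) = (p : ℚ) - 1 := by
      push_cast [Nat.cast_sub hp0]; ring
    rw [hc] at hsum
    have h3 : (p : ℚ) - 1 ≠ 0 := by linarith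
    field_simp
    linarith
  -- finish
  have hPne : (∏ i ∈ Finset.Icc 1 n, ρ i) ≠ 0 :=
    Finset.prod_ne_zero_iff.mpr fun i _ => hρ0' i
  have h1ζ : (1 - ζ) ≠ 0 := by
    have := hζne 1 one_pos hp1
    simpa using this
  have hdiv : v ((1 - ζ) / ∏ i ∈ Finset.Icc 1 n, ρ i) =
      v (1 - ζ) - v (∏ i ∈ Finset.Icc 1 n, ρ i) := by
    have h := hv_mul ((1 - ζ) / ∏ i ∈ Finset.Icc 1 n, ρ i) _ (div_ne_zero h1ζ hPne) hPne
    rw [div_mul_cancel₀ _ hPne] at h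
    linarith
  have hsumgeo : ∀ N : ℕ, ∑ i ∈ Finset.Icc 1 N, (1 : ℚ) / (p : ℚ) ^ i =
      ((p : ℚ) ^ N - 1) / ((p : ℚ) ^ N * ((p : ℚ) - 1)) := by
    intro N
    induction N with
    | zero => simp
    | succ N ih =>
      rw [Finset.sum_Icc_succ_top (by omega), ih]
      have h1 : ((p : ℚ)) ^ N ≠ 0 := pow_ne_zero _ hpQ0
      have h2 : ((p : ℚ)) ^ (N + 1) ≠ 0 := pow_ne_zero _ hpQ0
      have h3 : (p : ℚ) - 1 ≠ 0 := by linarith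
      field_simp
      ring
  rw [hdiv, hvζ1, hvprod _ _ fun i _ => hρ0' i,
    Finset.sum_congr rfl fun i _ => hvρ i, hsumgeo n]
  have h1 : ((p : ℚ)) ^ n ≠ 0 := pow_ne_zero _ hpQ0
  have h3 : (p : ℚ) - 1 ≠ 0 := by linarith
  field_simp
  try ring
end

section
/- For p = 3 and π = ζ_9 − 1, the element π^{−3}(3^{1/3} + π^2 + 2π^3) has 3-adic valuation 1/18 and hence is a uniformizer of ℚ_3(ζ_9, 3^{1/3}). -/
/-- For `p = 3` and `π = ζ_9 - 1`, the element `π^{-3}(3^{1/3} + π² + 2π³)` has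
`3`-adic valuation `1/18` and hence is a uniformizer of `ℚ_3(ζ_9, 3^{1/3})`. -/
theorem stmt18
    (K : Type*) [Field K] [Algebra ℚ_[3] K] [IsAlgClosure ℚ_[3] K]
    (v : K → ℚ)
    (hv_mul : ∀ x y : K, x ≠ 0 → y ≠ 0 → v (x * y) = v x + v y)
    (hv_add : ∀ x y : K, x ≠ 0 → y ≠ 0 → x + y ≠ 0 → min (v x) (v y) ≤ v (x + y))
    (hv_base : ∀ x : ℚ_[3], x ≠ 0 → v (algebraMap ℚ_[3] K x) = x.valuation)
    (ζ : K) (hζ : IsPrimitiveRoot ζ 9)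
    (ρ : K) (hρ : ρ ^ 3 = (3 : K)) :
    v ((ζ - 1) ^ (-3 : ℤ) * (ρ + (ζ - 1) ^ 2 + 2 * (ζ - 1) ^ 3)) = 1 / 18 := by
  haveI : CharZero K := charZero_of_injective_algebraMap (algebraMap ℚ_[3] K).injective
  set p : K := ζ - 1 with hpdef
  -- basics
  have hζ1 : ζ ≠ 1 := hζ.ne_one (by norm_num)
  have hp0 : p ≠ 0 := sub_ne_zero.mpr hζ1
  have hρ0 : ρ ≠ 0 := by
    intro h
    have h3 : (3 : K) = 0 := by rw [← hρ, h]; ring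
    exact three_ne_zero h3
  have hv1 : v 1 = 0 := by
    have := hv_mul 1 1 one_ne_zero one_ne_zero
    simp only [mul_one] at this; linarith
  have hvneg : ∀ x : K, x ≠ 0 → v (-x) = v x := by
    intro x hx
    have hm1 : v (-1 : K) = 0 := by
      have := hv_mul (-1 : K) (-1) (by norm_num) (by norm_num)
      simp only [neg_mul, one_mul, neg_neg, hv1] at this; linarith
    have := hv_mul (-1 : K) x (by norm_num) hx
    rw [neg_one_mul] at this; rw [this, hm1]; ring
  have hvinv : ∀ x : K, x ≠ 0 → v x⁻¹ = -v x := by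
    intro x hx
    have := hv_mul x x⁻¹ hx (inv_ne_zero hx)
    rw [mul_inv_cancel₀ hx, hv1] at this; linarith
  have hvpow : ∀ (x : K), x ≠ 0 → ∀ n : ℕ, v (x ^ n) = n * v x := by
    intro x hx n
    induction n with
    | zero => simp [hv1]
    | succ k ih =>
      rw [pow_succ, hv_mul _ _ (pow_ne_zero k hx) hx, ih]
      push_cast; ring
  -- ultrametric helpers
  have step : ∀ (c : ℚ) (x y : K), (x = 0 ∨ (x ≠ 0 ∧ c ≤ v x)) →
      (y = 0 ∨ (y ≠ 0 ∧ c ≤ v y)) → (x + y = 0 ∨ (x + y ≠ 0 ∧ c ≤ v (x + y))) := by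
    rintro c x y (rfl | ⟨hx, hcx⟩) hy
    · simpa using hy
    · rcases hy with rfl | ⟨hy, hcy⟩
      · simpa using Or.inr ⟨hx, hcx⟩
      · by_cases h0 : x + y = 0
        · exact Or.inl h0
        · exact Or.inr ⟨h0, le_trans (le_min hcx hcy) (hv_add x y hx hy h0)⟩
  have key : ∀ (c : ℚ) (x y : K), x ≠ 0 → v x < c →
      (y = 0 ∨ (y ≠ 0 ∧ c ≤ v y)) → (x + y ≠ 0 ∧ v (x + y) = v x) := by
    rintro c x y hx hxc (rfl | ⟨hy, hcy⟩)
    · exact ⟨by simpa using hx, by rw [add_zero]⟩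
    · have hne : x + y ≠ 0 := by
        intro h0
        have hyx : y = -x := by linear_combination h0
        rw [hyx, hvneg x hx] at hcy
        linarith
      refine ⟨hne, le_antisymm ?_ ?_⟩
      · by_contra hlt
        push_neg at hlt
        have hxyne : (x + y) + (-y) ≠ 0 := by
          intro h; apply hx; linear_combination h
        have h2 := hv_add (x + y) (-y) hne (neg_ne_zero.mpr hy) hxyne
        have hxy : (x + y) + (-y) = x := by ring
        rw [hxy, hvneg y hy] at h2
        have : v x < min (v (x + y)) (v y) := lt_min hlt (lt_of_lt_of_le hxc hcy)
        linarith
      · have h1 := hv_add x y hx hy hne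
        have hm : min (v x) (v y) = v x := min_eq_left (by linarith)
        rw [hm] at h1; exact h1
  -- valuations of integers
  have hvnat : ∀ n : ℕ, ¬ (3 ∣ n) → ((n : K) ≠ 0 ∧ v ((n : K)) = 0) := by
    intro n hn
    have hn0 : n ≠ 0 := by rintro rfl; exact hn (dvd_zero 3)
    have hq : ((n : ℚ_[3])) ≠ 0 := Nat.cast_ne_zero.mpr hn0
    have h2 := hv_base _ hq
    rw [map_natCast] at h2
    refine ⟨Nat.cast_ne_zero.mpr hn0, ?_⟩
    rw [h2, Padic.valuation_natCast, padicValNat.eq_zero_of_not_dvd hn]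
    simp
  have hv3 : v ((3 : K)) = 1 := by
    have hq : ((3 : ℕ) : ℚ_[3]) ≠ 0 := by norm_num
    have h2 := hv_base _ hq
    rw [map_natCast] at h2
    have h3 : (((3 : ℕ) : ℚ_[3])).valuation = 1 := Padic.valuation_p
    rw [h3] at h2
    simpa using h2
  have hvc : ∀ (a b : ℕ) (x : K), ¬ (3 ∣ b) → x = (3 : K) ^ a * (b : K) →
      (x ≠ 0 ∧ v x = a) := by
    intro a b x hb hx
    obtain ⟨hb0, hbv⟩ := hvnat b hb
    have h3 : (3 : K) ≠ 0 := three_ne_zero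
    constructor
    · rw [hx]; exact mul_ne_zero (pow_ne_zero _ h3) hb0
    · rw [hx, hv_mul _ _ (pow_ne_zero _ h3) hb0, hvpow _ h3, hv3, hbv]; ring
  set t : ℚ := v p with htdef
  -- the minimal polynomial relation for p = ζ - 1
  have hζ9 : ζ ^ 9 = 1 := hζ.pow_eq_one
  have hz3ne : ζ ^ 3 ≠ 1 := by
    intro h
    have := hζ.dvd_of_pow_eq_one 3 h
    norm_num at this
  have hz3 : ζ ^ 6 + ζ ^ 3 + 1 = 0 := by
    have hfac : (ζ ^ 3 - 1) * (ζ ^ 6 + ζ ^ 3 + 1) = 0 := by linear_combination hζ9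
    rcases mul_eq_zero.mp hfac with h | h
    · exact absurd (by linear_combination h) hz3ne
    · exact h
  have hP : p ^ 6 + 6 * p ^ 5 + 15 * p ^ 4 + 21 * p ^ 3 + 18 * p ^ 2 + 9 * p + 3 = 0 := by
    rw [hpdef]; linear_combination hz3
  -- term data for the Newton polygon argument
  obtain ⟨h6ne, h6v⟩ := hvc 1 2 (6 : K) (by norm_num) (by norm_num)
  obtain ⟨h15ne, h15v⟩ := hvc 1 5 (15 : K) (by norm_num) (by norm_num)
  obtain ⟨h21ne, h21v⟩ := hvc 1 7 (21 : K) (by norm_num) (by norm_num)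
  obtain ⟨h18ne, h18v⟩ := hvc 2 2 (18 : K) (by norm_num) (by norm_num)
  obtain ⟨h9ne, h9v⟩ := hvc 2 1 (9 : K) (by norm_num) (by norm_num)
  have hterm : ∀ (a : K) (k : ℕ), a ≠ 0 → (a * p ^ k ≠ 0 ∧ v (a * p ^ k) = v a + k * t) := by
    intro a k ha
    refine ⟨mul_ne_zero ha (pow_ne_zero _ hp0), ?_⟩
    rw [hv_mul _ _ ha (pow_ne_zero _ hp0), hvpow p hp0]
  -- v p = 1/6
  have ht : t = 1 / 6 := by
    rcases lt_trichotomy t (1 / 6) with h | h | h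
    · exfalso
      set c0 : ℚ := 1 + 6 * min t 0 with hc0
      have hmin : ∀ k : ℚ, 0 ≤ k → k ≤ 5 → 6 * min t 0 ≤ k * t := by
        intro k hk0 hk5
        rcases min_cases t 0 with ⟨he, ht0⟩ | ⟨he, ht0⟩ <;> rw [he] <;> nlinarith
      have q0 : (3 : K) = 0 ∨ ((3 : K) ≠ 0 ∧ c0 ≤ v (3 : K)) := by
        refine Or.inr ⟨three_ne_zero, ?_⟩
        rw [hv3]
        have := min_le_right t 0
        linarith
      have e1 : c0 ≤ v ((9 : K) * p ^ 1) := by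
        rw [(hterm 9 1 h9ne).2, h9v]
        have := hmin 1 (by norm_num) (by norm_num)
        push_cast
        linarith
      have e2 : c0 ≤ v ((18 : K) * p ^ 2) := by
        rw [(hterm 18 2 h18ne).2, h18v]
        have := hmin 2 (by norm_num) (by norm_num)
        push_cast
        linarith
      have e3 : c0 ≤ v ((21 : K) * p ^ 3) := by
        rw [(hterm 21 3 h21ne).2, h21v]
        have := hmin 3 (by norm_num) (by norm_num)
        push_cast
        linarith
      have e4 : c0 ≤ v ((15 : K) * p ^ 4) := by
        rw [(hterm 15 4 h15ne).2, h15v]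
        have := hmin 4 (by norm_num) (by norm_num)
        push_cast
        linarith
      have e5 : c0 ≤ v ((6 : K) * p ^ 5) := by
        rw [(hterm 6 5 h6ne).2, h6v]
        have := hmin 5 (by norm_num) (by norm_num)
        push_cast
        linarith
      have q1 := step c0 ((9 : K) * p ^ 1) 3 (Or.inr ⟨(hterm 9 1 h9ne).1, e1⟩) q0
      have q2 := step c0 ((18 : K) * p ^ 2) _ (Or.inr ⟨(hterm 18 2 h18ne).1, e2⟩) q1
      have q3 := step c0 ((21 : K) * p ^ 3) _ (Or.inr ⟨(hterm 21 3 h21ne).1, e3⟩) q2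
      have q4 := step c0 ((15 : K) * p ^ 4) _ (Or.inr ⟨(hterm 15 4 h15ne).1, e4⟩) q3
      have q5 := step c0 ((6 : K) * p ^ 5) _ (Or.inr ⟨(hterm 6 5 h6ne).1, e5⟩) q4
      have hS : (6 : K) * p ^ 5 + ((15 : K) * p ^ 4 + ((21 : K) * p ^ 3 +
          ((18 : K) * p ^ 2 + ((9 : K) * p ^ 1 + (3 : K))))) = -(p ^ 6) := by
        linear_combination hP
      rw [hS] at q5
      rcases q5 with h0 | ⟨-, hvS⟩
      · exact (pow_ne_zero 6 hp0) (by linear_combination -h0)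
      · rw [hvneg _ (pow_ne_zero 6 hp0), hvpow p hp0 6] at hvS
        rw [hc0] at hvS
        rcases min_cases t 0 with ⟨he, ht0⟩ | ⟨he, ht0⟩ <;> rw [he] at hvS <;>
          push_cast at hvS <;> nlinarith
    · exact h
    · exfalso
      set c0 : ℚ := min (6 * t) (1 + t) with hc0
      have hc01 : 1 < c0 := lt_min (by linarith) (by linarith)
      have hmr := min_le_right (6 * t) (1 + t)
      have hml := min_le_left (6 * t) (1 + t)
      have e1 : c0 ≤ v ((9 : K) * p ^ 1) := by
        rw [(hterm 9 1 h9ne).2, h9v]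
        push_cast
        linarith
      have e2 : c0 ≤ v ((18 : K) * p ^ 2) := by
        rw [(hterm 18 2 h18ne).2, h18v]
        push_cast
        linarith
      have e3 : c0 ≤ v ((21 : K) * p ^ 3) := by
        rw [(hterm 21 3 h21ne).2, h21v]
        push_cast
        linarith
      have e4 : c0 ≤ v ((15 : K) * p ^ 4) := by
        rw [(hterm 15 4 h15ne).2, h15v]
        push_cast
        linarith
      have e5 : c0 ≤ v ((6 : K) * p ^ 5) := by
        rw [(hterm 6 5 h6ne).2, h6v]
        push_cast
        linarith
      have e6 : c0 ≤ v (p ^ 6) := by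
        rw [hvpow p hp0 6]
        push_cast
        linarith
      have q0 : (9 : K) * p ^ 1 = 0 ∨ ((9 : K) * p ^ 1 ≠ 0 ∧ c0 ≤ v ((9 : K) * p ^ 1)) :=
        Or.inr ⟨(hterm 9 1 h9ne).1, e1⟩
      have q1 := step c0 ((18 : K) * p ^ 2) _ (Or.inr ⟨(hterm 18 2 h18ne).1, e2⟩) q0
      have q2 := step c0 ((21 : K) * p ^ 3) _ (Or.inr ⟨(hterm 21 3 h21ne).1, e3⟩) q1
      have q3 := step c0 ((15 : K) * p ^ 4) _ (Or.inr ⟨(hterm 15 4 h15ne).1, e4⟩) q2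
      have q4 := step c0 ((6 : K) * p ^ 5) _ (Or.inr ⟨(hterm 6 5 h6ne).1, e5⟩) q3
      have q5 := step c0 (p ^ 6) _ (Or.inr ⟨pow_ne_zero 6 hp0, e6⟩) q4
      have hS : p ^ 6 + ((6 : K) * p ^ 5 + ((15 : K) * p ^ 4 + ((21 : K) * p ^ 3 +
          ((18 : K) * p ^ 2 + (9 : K) * p ^ 1)))) = -(3 : K) := by
        linear_combination hP
      rw [hS] at q5
      rcases q5 with h0 | ⟨-, hvS⟩
      · exact three_ne_zero (α := K) (by linear_combination -h0)
      · rw [hvneg _ (three_ne_zero (α := K)), hv3] at hvS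
        linarith
  -- v ρ = 1/3
  have hvρ : v ρ = 1 / 3 := by
    have := hvpow ρ hρ0 3
    rw [hρ, hv3] at this
    push_cast at this
    linarith
  -- v (1 + 2p) = 0
  obtain ⟨h2ne, h2v⟩ := hvnat 2 (by norm_num)
  have h12 : (1 : K) + 2 * p ≠ 0 ∧ v ((1 : K) + 2 * p) = v (1 : K) := by
    refine key (1 / 6) 1 (2 * p) one_ne_zero (by rw [hv1]; norm_num) (Or.inr ⟨?_, ?_⟩)
    · exact mul_ne_zero (by exact_mod_cast h2ne) hp0
    · rw [hv_mul _ _ (by exact_mod_cast h2ne) hp0]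
      have h2v' : v ((2 : K)) = 0 := by exact_mod_cast h2v
      rw [h2v', ← htdef, ht]; norm_num
  -- the key cubic relation for x
  set x : K := ρ + p ^ 2 + 2 * p ^ 3 with hxdef
  obtain ⟨h429ne, h429v⟩ := hvc 1 143 (429 : K) (by norm_num) (by norm_num)
  obtain ⟨h492ne, h492v⟩ := hvc 1 164 (492 : K) (by norm_num) (by norm_num)
  obtain ⟨h384ne, h384v⟩ := hvc 1 128 (384 : K) (by norm_num) (by norm_num)
  obtain ⟨h192ne, h192v⟩ := hvc 1 64 (192 : K) (by norm_num) (by norm_num)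
  obtain ⟨h48ne, h48v⟩ := hvc 1 16 (48 : K) (by norm_num) (by norm_num)
  obtain ⟨h261ne, h261v⟩ := hvc 2 29 (261 : K) (by norm_num) (by norm_num)
  obtain ⟨h27ne, h27v⟩ := hvc 3 1 (27 : K) (by norm_num) (by norm_num)
  obtain ⟨h108ne, h108v⟩ := hvc 3 4 (108 : K) (by norm_num) (by norm_num)
  have hnterm : ∀ (a : K) (k : ℕ), a ≠ 0 →
      (-(a * p ^ k) ≠ 0 ∧ v (-(a * p ^ k)) = v a + k * t) := by
    intro a k ha
    obtain ⟨hne, hv⟩ := hterm a k ha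
    exact ⟨neg_ne_zero.mpr hne, by rw [hvneg _ hne, hv]⟩
  set R : K := -((429 : K) * p ^ 4) + (-((492 : K) * p ^ 5) + (-((384 : K) * p ^ 6) +
      (-((192 : K) * p ^ 7) + (-((48 : K) * p ^ 8) + (-((261 : K) * p ^ 3) +
      (-((27 : K) * p ^ 1) + -((108 : K) * p ^ 2))))))) with hRdef
  have hMain : x ^ 3 = 3 * ρ * p ^ 2 * ((1 : K) + 2 * p) * x + R := by
    rw [hxdef, hRdef]
    linear_combination hρ + ((1 : K) + 2 * p) ^ 3 * hP
  -- v R = 5/3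
  have f1 : (11 / 6 : ℚ) ≤ v (-((27 : K) * p ^ 1)) := by
    rw [(hnterm 27 1 h27ne).2, h27v, ht]; norm_num
  have f2 : (11 / 6 : ℚ) ≤ v (-((108 : K) * p ^ 2)) := by
    rw [(hnterm 108 2 h108ne).2, h108v, ht]; norm_num
  have f3 : (11 / 6 : ℚ) ≤ v (-((261 : K) * p ^ 3)) := by
    rw [(hnterm 261 3 h261ne).2, h261v, ht]; norm_num
  have f4 : (11 / 6 : ℚ) ≤ v (-((48 : K) * p ^ 8)) := by
    rw [(hnterm 48 8 h48ne).2, h48v, ht]; norm_num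
  have f5 : (11 / 6 : ℚ) ≤ v (-((192 : K) * p ^ 7)) := by
    rw [(hnterm 192 7 h192ne).2, h192v, ht]; norm_num
  have f6 : (11 / 6 : ℚ) ≤ v (-((384 : K) * p ^ 6)) := by
    rw [(hnterm 384 6 h384ne).2, h384v, ht]; norm_num
  have f7 : (11 / 6 : ℚ) ≤ v (-((492 : K) * p ^ 5)) := by
    rw [(hnterm 492 5 h492ne).2, h492v, ht]; norm_num
  have q1 := step (11 / 6 : ℚ) (-((27 : K) * p ^ 1)) _
    (Or.inr ⟨(hnterm 27 1 h27ne).1, f1⟩) (Or.inr ⟨(hnterm 108 2 h108ne).1, f2⟩)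
  have q2 := step (11 / 6 : ℚ) (-((261 : K) * p ^ 3)) _
    (Or.inr ⟨(hnterm 261 3 h261ne).1, f3⟩) q1
  have q3 := step (11 / 6 : ℚ) (-((48 : K) * p ^ 8)) _
    (Or.inr ⟨(hnterm 48 8 h48ne).1, f4⟩) q2
  have q4 := step (11 / 6 : ℚ) (-((192 : K) * p ^ 7)) _
    (Or.inr ⟨(hnterm 192 7 h192ne).1, f5⟩) q3
  have q5 := step (11 / 6 : ℚ) (-((384 : K) * p ^ 6)) _
    (Or.inr ⟨(hnterm 384 6 h384ne).1, f6⟩) q4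
  have q6 := step (11 / 6 : ℚ) (-((492 : K) * p ^ 5)) _
    (Or.inr ⟨(hnterm 492 5 h492ne).1, f7⟩) q5
  have f0 : v (-((429 : K) * p ^ 4)) < 11 / 6 := by
    rw [(hnterm 429 4 h429ne).2, h429v, ht]; norm_num
  have hvR : R ≠ 0 ∧ v R = v (-((429 : K) * p ^ 4)) := by
    rw [hRdef]
    exact key (11 / 6 : ℚ) _ _ (hnterm 429 4 h429ne).1 f0 q6
  have hvR' : v R = 5 / 3 := by
    rw [hvR.2, (hnterm 429 4 h429ne).2, h429v, ht]; norm_num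
  -- x ≠ 0
  have hx0 : x ≠ 0 := by
    intro h
    apply hvR.1
    have := hMain
    rw [h] at this
    simpa using this.symm
  -- v of the linear coefficient times x
  have hAne : 3 * ρ * p ^ 2 * ((1 : K) + 2 * p) * x ≠ 0 :=
    mul_ne_zero (mul_ne_zero (mul_ne_zero (mul_ne_zero three_ne_zero hρ0)
      (pow_ne_zero 2 hp0)) h12.1) hx0
  have hAv : v (3 * ρ * p ^ 2 * ((1 : K) + 2 * p) * x) = 5 / 3 + v x := by
    rw [hv_mul _ _ (mul_ne_zero (mul_ne_zero (mul_ne_zero three_ne_zero hρ0)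
      (pow_ne_zero 2 hp0)) h12.1) hx0,
      hv_mul _ _ (mul_ne_zero (mul_ne_zero three_ne_zero hρ0) (pow_ne_zero 2 hp0)) h12.1,
      hv_mul _ _ (mul_ne_zero three_ne_zero hρ0) (pow_ne_zero 2 hp0),
      hv_mul _ _ (three_ne_zero (α := K)) hρ0,
      hv3, hvρ, hvpow p hp0 2, ← htdef, ht, h12.2, hv1]
    push_cast; ring
  have hx3v : v (x ^ 3) = 3 * v x := by
    have := hvpow x hx0 3; push_cast at this; exact this
  -- v x = 5/9
  have hvx : v x = 5 / 9 := by
    rcases lt_trichotomy (v x) (5 / 9) with h | h | h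
    · exfalso
      have hadd := hv_add _ _ hAne hvR.1 (by rw [← hMain]; exact pow_ne_zero 3 hx0)
      rw [← hMain, hx3v, hAv, hvR'] at hadd
      rcases min_cases (5 / 3 + v x) (5 / 3 : ℚ) with ⟨he, -⟩ | ⟨he, -⟩ <;>
        rw [he] at hadd <;> linarith
    · exact h
    · exfalso
      have hR' : R = x ^ 3 + -(3 * ρ * p ^ 2 * ((1 : K) + 2 * p) * x) := by
        linear_combination -hMain
      have hadd := hv_add (x ^ 3) (-(3 * ρ * p ^ 2 * ((1 : K) + 2 * p) * x))
        (pow_ne_zero 3 hx0) (neg_ne_zero.mpr hAne) (by rw [← hR']; exact hvR.1)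
      rw [← hR', hvR', hx3v, hvneg _ hAne, hAv] at hadd
      rcases min_cases (3 * v x) (5 / 3 + v x) with ⟨he, -⟩ | ⟨he, -⟩ <;>
        rw [he] at hadd <;> linarith
  -- finish
  have hzpow : p ^ (-3 : ℤ) = (p ^ (3 : ℕ))⁻¹ := by
    rw [show ((-3 : ℤ)) = -((3 : ℕ) : ℤ) by norm_num, zpow_neg, zpow_natCast]
  rw [hzpow, hv_mul _ _ (inv_ne_zero (pow_ne_zero 3 hp0)) hx0,
    hvinv _ (pow_ne_zero 3 hp0), hvpow p hp0 3, ← htdef, ht, hvx]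
  norm_num
end
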